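/- arXiv:1610.04099 — 2 statements merged into one kernel-verified Lean document; each statement's English description precedes it below -/
import Mathlib

section
/- Let G = ⟨f₁,…,fₙ⟩ ≤ Homeo⁺(ℝ) be an n-chain group (n ≥ 2) whose action is minimal, i.e., for every point p in supp G the orbit G·p is dense in supp G. Then the commutator subgroup G′ is a simple group, and every nontrivial normal subgroup of G contains G′ (equivalently, every proper quotient of G is abelian). -/
/-- The group of orientation-preserving homeomorphisms of `ℝ`,
realized as order-automorphisms of `ℝ`. -/
abbrev HomeoR := ℝ ≃o ℝ

/-- The support of a homeomorphism of `ℝ`. -/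
def supp (f : HomeoR) : Set ℝ := {x : ℝ | f x ≠ x}

/-- The support of a subgroup of `Homeo⁺(ℝ)`. -/
def suppG (G : Subgroup HomeoR) : Set ℝ := ⋃ g ∈ G, supp g

/-- The open interval in `ℝ` with `EReal` endpoints. -/
def eIoo (a b : EReal) : Set ℝ := {t : ℝ | a < (t : EReal) ∧ (t : EReal) < b}

/-- `a b : Fin n → EReal` are the endpoints of an `n`-chain of intervals. -/
def IsChainOfIntervals {n : ℕ} (a b : Fin n → EReal) : Prop :=
  (∀ i, a i < b i) ∧
  (∀ (i : ℕ) (h : i + 1 < n),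
      a ⟨i, by omega⟩ < a ⟨i + 1, h⟩ ∧ a ⟨i + 1, h⟩ < b ⟨i, by omega⟩ ∧
      b ⟨i, by omega⟩ < b ⟨i + 1, h⟩) ∧
  (∀ (i : ℕ) (h : i + 2 < n), b ⟨i, by omega⟩ ≤ a ⟨i + 2, h⟩)

/-- `f : Fin n → HomeoR` is a family of generators of an `n`-prechain group. -/
def IsPrechainGens {n : ℕ} (f : Fin n → HomeoR) : Prop :=
  2 ≤ n ∧
  ∃ a b : Fin n → EReal, IsChainOfIntervals a b ∧
    (∀ i, supp (f i) = eIoo (a i) (b i)) ∧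
    (∀ i, ∀ t : ℝ, t ≤ f i t)

open scoped commutatorElement

/-- The relators of Thompson's group `F`: `[b⁻¹a, aba⁻¹]` and `[b⁻¹a, a²ba⁻²]`. -/
def thompsonFRels : Set (FreeGroup (Fin 2)) :=
  letI a : FreeGroup (Fin 2) := FreeGroup.of 0
  letI b : FreeGroup (Fin 2) := FreeGroup.of 1
  {⁅b⁻¹ * a, a * b * a⁻¹⁆, ⁅b⁻¹ * a, a ^ 2 * b * a⁻¹ ^ 2⁆}

/-- Thompson's group `F`. -/
def ThompsonF : Type := PresentedGroup thompsonFRels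

instance : Group ThompsonF := by unfold ThompsonF; infer_instance

/-- The relators of the Higman–Thompson group `Fₙ`:
`gᵢ⁻¹ gⱼ gᵢ g_{j+n-1}⁻¹` for `i < j`. -/
def higmanThompsonRels (n : ℕ) : Set (FreeGroup ℕ) :=
  {r | ∃ i j : ℕ, i < j ∧
      r = (FreeGroup.of i)⁻¹ * FreeGroup.of j * FreeGroup.of i *
        (FreeGroup.of (j + n - 1))⁻¹}

/-- The Higman–Thompson group `Fₙ`. -/
def HigmanThompsonF (n : ℕ) : Type := PresentedGroup (higmanThompsonRels n)

instance (n : ℕ) : Group (HigmanThompsonF n) := by unfold HigmanThompsonF; infer_instance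

/-- `f : Fin n → HomeoR` is a family of generators of an `n`-chain group:
a prechain family such that each pair of consecutive generators generates a copy of
Thompson's group `F`. -/
def IsChainGens {n : ℕ} (f : Fin n → HomeoR) : Prop :=
  IsPrechainGens f ∧
  ∀ (i : ℕ) (h : i + 1 < n),
    Nonempty ((Subgroup.closure {f ⟨i, by omega⟩, f ⟨i + 1, h⟩} : Subgroup HomeoR) ≃* ThompsonF)

/-- A subgroup of `Homeo⁺(ℝ)` is an `n`-chain group if it is generated by an
`n`-family of chain group generators. -/
def IsChainGroup (n : ℕ) (G : Subgroup HomeoR) : Prop :=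
  ∃ f : Fin n → HomeoR, IsChainGens f ∧ G = Subgroup.closure (Set.range f)

/-- The orbit of a point under a subgroup of `Homeo⁺(ℝ)`. -/
def orbitG (G : Subgroup HomeoR) (x : ℝ) : Set ℝ := {y : ℝ | ∃ g ∈ G, g x = y}


namespace ChainAux

@[simp] lemma inv_apply_self (g : HomeoR) (x : ℝ) : g⁻¹ (g x) = x := by simp
@[simp] lemma apply_inv_self (g : HomeoR) (x : ℝ) : g (g⁻¹ x) = x := by
  show g (g.symm x) = x; simp

lemma supp_one : supp (1 : HomeoR) = ∅ := by ext x; simp [supp]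

lemma mem_supp {g : HomeoR} {x : ℝ} : x ∈ supp g ↔ g x ≠ x := Iff.rfl

lemma not_mem_supp {g : HomeoR} {x : ℝ} : x ∉ supp g ↔ g x = x := by simp [supp]

lemma homeo_ext {g h : HomeoR} (H : ∀ x, g x = h x) : g = h := by
  ext x; exact H x

lemma ne_one_iff {g : HomeoR} : g ≠ 1 ↔ ∃ x, g x ≠ x := by
  constructor
  · intro h
    by_contra hc
    push_neg at hc
    exact h (homeo_ext fun x => hc x)
  · rintro ⟨x, hx⟩ rfl; exact hx rfl

lemma supp_inv (g : HomeoR) : supp g⁻¹ = supp g := by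
  ext x
  simp only [mem_supp]
  constructor
  · intro h hx
    apply h
    have := congrArg (fun y => g⁻¹ y) hx
    simpa using this.symm
  · intro h hx
    apply h
    have := congrArg (fun y => g y) hx
    simpa using this.symm

lemma inv_apply_eq_of {g : HomeoR} {x : ℝ} (h : g x = x) : g⁻¹ x = x := by
  have : x ∉ supp g := not_mem_supp.2 h
  rw [← supp_inv] at this
  exact not_mem_supp.1 this

lemma supp_mul_subset (g h : HomeoR) : supp (g * h) ⊆ supp g ∪ supp h := by
  intro x hx
  by_contra hc
  simp only [Set.mem_union, not_or] at hc
  obtain ⟨h1, h2⟩ := hc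
  rw [not_mem_supp] at h1 h2
  exact hx (by show g (h x) = x; rw [h2, h1])

lemma apply_mem_supp {g : HomeoR} {x : ℝ} (hx : x ∈ supp g) : g x ∈ supp g := by
  rw [mem_supp] at hx ⊢
  rcases lt_or_gt_of_ne hx with h | h
  · exact ne_of_lt (g.strictMono h)
  · exact ne_of_gt (g.strictMono h)

lemma inv_apply_mem_supp {g : HomeoR} {x : ℝ} (hx : x ∈ supp g) : g⁻¹ x ∈ supp g := by
  rw [← supp_inv] at hx ⊢
  exact apply_mem_supp hx

lemma mul_apply (g h : HomeoR) (x : ℝ) : (g * h) x = g (h x) := rfl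

lemma conj_apply (g h : HomeoR) (x : ℝ) : (g * h * g⁻¹) x = g (h (g⁻¹ x)) := rfl

lemma supp_conj (g h : HomeoR) : supp (g * h * g⁻¹) = g '' supp h := by
  ext x
  simp only [mem_supp, conj_apply, Set.mem_image]
  constructor
  · intro hx
    refine ⟨g⁻¹ x, ?_, by simp⟩
    intro hc
    apply hx
    rw [hc]; simp
  · rintro ⟨y, hy, rfl⟩
    intro hc
    apply hy
    have h2 := g.injective hc
    rwa [inv_apply_self] at h2

lemma conj_eq_of_fix {w h : HomeoR} (H : ∀ x ∈ supp h, w x = x) : w * h * w⁻¹ = h := by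
  have Hinv : ∀ x ∈ supp h, w⁻¹ x = x := by
    intro x hx
    have := H x hx
    nth_rewrite 1 [← this]
    simp
  apply homeo_ext
  intro x
  rw [conj_apply]
  by_cases hx : x ∈ supp h
  · rw [Hinv x hx, H _ (apply_mem_supp hx)]
  · have h1 : w⁻¹ x ∉ supp h := by
      intro hc
      have hw := H _ hc
      rw [apply_inv_self] at hw
      exact hx (by rwa [← hw] at hc)
    rw [not_mem_supp.1 h1, not_mem_supp.1 hx]
    simp

/-- Replacement lemma: if `σ` agrees with `g` on `supp h`, conjugation agrees. -/
lemma conj_eq_conj_of_eqOn {g σ h : HomeoR} (H : ∀ x ∈ supp h, σ x = g x) :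
    g * h * g⁻¹ = σ * h * σ⁻¹ := by
  have key : (σ⁻¹ * g) * h * (σ⁻¹ * g)⁻¹ = h := by
    apply conj_eq_of_fix
    intro x hx
    show σ⁻¹ (g x) = x
    rw [← H x hx]; simp
  calc g * h * g⁻¹ = σ * ((σ⁻¹ * g) * h * (σ⁻¹ * g)⁻¹) * σ⁻¹ := by group
    _ = σ * h * σ⁻¹ := by rw [key]

lemma commutator_eq_of_eqOn {g σ h : HomeoR} (H : ∀ x ∈ supp h, σ x = g x) :
    ⁅g, h⁆ = ⁅σ, h⁆ := by
  have := conj_eq_conj_of_eqOn H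
  simp only [commutatorElement_def]
  calc g * h * g⁻¹ * h⁻¹ = (g * h * g⁻¹) * h⁻¹ := by group
    _ = (σ * h * σ⁻¹) * h⁻¹ := by rw [this]
    _ = σ * h * σ⁻¹ * h⁻¹ := by group

lemma commute_of_disjoint_supp {g h : HomeoR} (H : Disjoint (supp g) (supp h)) :
    g * h = h * g := by
  have : h * g * h⁻¹ = g := by
    apply conj_eq_of_fix
    intro x hx
    exact not_mem_supp.1 (Set.disjoint_left.1 H hx)
  calc g * h = (h * g * h⁻¹) * h := by rw [this]
    _ = h * g := by group

/-- the commutator trick -/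
lemma commutator_trick {u v γ : HomeoR} {U : Set ℝ}
    (hu : supp u ⊆ U) (hv : supp v ⊆ U) (hU : ∀ x ∈ U, γ x ∉ U) :
    ⁅⁅u, γ⁆, v⁆ = ⁅u, v⁆ := by
  have hw : supp (γ * u⁻¹ * γ⁻¹) ⊆ γ '' U := by
    rw [supp_conj, supp_inv]
    exact Set.image_mono hu
  have hcomm : (γ * u⁻¹ * γ⁻¹) * v = v * (γ * u⁻¹ * γ⁻¹) := by
    apply commute_of_disjoint_supp
    rw [Set.disjoint_left]
    intro x hx
    obtain ⟨y, hy, rfl⟩ := hw hx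
    intro hc
    exact hU y hy (hv hc)
  have hk : ⁅u, γ⁆ = u * (γ * u⁻¹ * γ⁻¹) := by group
  rw [hk]
  simp only [commutatorElement_def]
  set w := γ * u⁻¹ * γ⁻¹ with hwdef
  calc u * w * v * (u * w)⁻¹ * v⁻¹ = u * (w * v) * w⁻¹ * u⁻¹ * v⁻¹ := by group
    _ = u * (v * w) * w⁻¹ * u⁻¹ * v⁻¹ := by rw [hcomm]
    _ = u * v * u⁻¹ * v⁻¹ := by group

end ChainAux

namespace ChainAux

structure ChainSetup {n : ℕ} (f : Fin n → HomeoR) (a b : Fin n → EReal)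
    (G : Subgroup HomeoR) : Prop where
  hn : 2 ≤ n
  hab : IsChainOfIntervals a b
  hsupp : ∀ i, supp (f i) = eIoo (a i) (b i)
  hge : ∀ i, ∀ t : ℝ, t ≤ f i t
  hG : G = Subgroup.closure (Set.range f)

variable {n : ℕ} {f : Fin n → HomeoR} {a b : Fin n → EReal} {G : Subgroup HomeoR}

namespace ChainSetup

variable (S : ChainSetup f a b G)
include S

/-- index 0 -/
def i0 : Fin n := ⟨0, by have := S.hn; omega⟩
/-- the last index -/
def iN : Fin n := ⟨n - 1, by have := S.hn; omega⟩

/-- left endpoint -/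
def A : EReal := a (S.i0)
/-- right endpoint -/
def B : EReal := b (S.iN)

lemma a_strict_mono : ∀ i j : Fin n, i < j → a i < a j := by
  have key : ∀ (k i : ℕ) (h : i + k < n), a ⟨i, by omega⟩ < a ⟨i + k, h⟩ ∨ k = 0 := by
    intro k
    induction k with
    | zero => intro i h; right; rfl
    | succ m ih =>
      intro i h
      left
      have h1 : i + m < n := by omega
      have h2 := (S.hab.2.1 (i + m) (by omega)).1
      rcases ih i h1 with h3 | h3
      · calc a ⟨i, by omega⟩ < a ⟨i + m, h1⟩ := h3
          _ < a ⟨i + m + 1, by omega⟩ := h2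
          _ = a ⟨i + (m + 1), by omega⟩ := by first | (congr 1; omega) | congr 1
      · subst h3
        calc a ⟨i, by omega⟩ = a ⟨i + 0, by omega⟩ := by first | (congr 1; omega) | congr 1
          _ < a ⟨i + 0 + 1, by omega⟩ := h2
          _ = a ⟨i + (0 + 1), by omega⟩ := by first | (congr 1; omega) | congr 1
  intro i j hij
  have h1 : (i : ℕ) + ((j : ℕ) - (i : ℕ)) < n := by omega
  have h2 := key ((j : ℕ) - (i : ℕ)) i h1
  rcases h2 with h2 | h2
  · have he : (⟨(i : ℕ) + ((j : ℕ) - (i : ℕ)), h1⟩ : Fin n) = j := by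
      apply Fin.ext; simp; omega
    rw [he] at h2
    have he2 : (⟨(i : ℕ), by omega⟩ : Fin n) = i := Fin.ext rfl
    rwa [he2] at h2
  · have : (i : ℕ) < (j : ℕ) := hij
    omega

lemma b_strict_mono : ∀ i j : Fin n, i < j → b i < b j := by
  have key : ∀ (k i : ℕ) (h : i + k < n), b ⟨i, by omega⟩ < b ⟨i + k, h⟩ ∨ k = 0 := by
    intro k
    induction k with
    | zero => intro i h; right; rfl
    | succ m ih =>
      intro i h
      left
      have h1 : i + m < n := by omega
      have h2 := (S.hab.2.1 (i + m) (by omega)).2.2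
      rcases ih i h1 with h3 | h3
      · calc b ⟨i, by omega⟩ < b ⟨i + m, h1⟩ := h3
          _ < b ⟨i + m + 1, by omega⟩ := h2
          _ = b ⟨i + (m + 1), by omega⟩ := by first | (congr 1; omega) | congr 1
      · subst h3
        calc b ⟨i, by omega⟩ = b ⟨i + 0, by omega⟩ := by first | (congr 1; omega) | congr 1
          _ < b ⟨i + 0 + 1, by omega⟩ := h2
          _ = b ⟨i + (0 + 1), by omega⟩ := by first | (congr 1; omega) | congr 1
  intro i j hij
  have h1 : (i : ℕ) + ((j : ℕ) - (i : ℕ)) < n := by omega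
  have h2 := key ((j : ℕ) - (i : ℕ)) i h1
  rcases h2 with h2 | h2
  · have he : (⟨(i : ℕ) + ((j : ℕ) - (i : ℕ)), h1⟩ : Fin n) = j := by
      apply Fin.ext; simp; omega
    rw [he] at h2
    have he2 : (⟨(i : ℕ), by omega⟩ : Fin n) = i := Fin.ext rfl
    rwa [he2] at h2
  · have : (i : ℕ) < (j : ℕ) := hij
    omega

lemma a_mono : ∀ i j : Fin n, i ≤ j → a i ≤ a j := by
  intro i j hij
  rcases eq_or_lt_of_le hij with rfl | h
  · exact le_refl _
  · exact le_of_lt (S.a_strict_mono i j h)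

lemma b_mono : ∀ i j : Fin n, i ≤ j → b i ≤ b j := by
  intro i j hij
  rcases eq_or_lt_of_le hij with rfl | h
  · exact le_refl _
  · exact le_of_lt (S.b_strict_mono i j h)

lemma A_le_a (i : Fin n) : S.A ≤ a i := S.a_mono S.i0 i (by show (0:ℕ) ≤ (i:ℕ); omega)

lemma b_le_B (i : Fin n) : b i ≤ S.B := by
  apply S.b_mono
  show (i : ℕ) ≤ n - 1
  have := i.isLt; omega

lemma a_lt_b (i : Fin n) : a i < b i := S.hab.1 i

lemma A_lt_B : S.A < S.B := lt_of_le_of_lt (S.A_le_a S.iN) (S.a_lt_b S.iN)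

lemma A_lt_b (i : Fin n) : S.A < b i := lt_of_le_of_lt (S.A_le_a i) (S.a_lt_b i)

lemma a_lt_B (i : Fin n) : a i < S.B := lt_of_lt_of_le (S.a_lt_b i) (S.b_le_B i)

/-- the big interval -/
def J : Set ℝ := eIoo S.A S.B

lemma Ji_subset_J (i : Fin n) : eIoo (a i) (b i) ⊆ S.J := by
  intro x hx
  exact ⟨lt_of_le_of_lt (S.A_le_a i) hx.1, lt_of_lt_of_le hx.2 (S.b_le_B i)⟩

lemma J_convex {c d x : ℝ} (hc : c ∈ S.J) (hd : d ∈ S.J) (h1 : c ≤ x) (h2 : x ≤ d) :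
    x ∈ S.J := by
  constructor
  · exact lt_of_lt_of_le hc.1 (EReal.coe_le_coe_iff.2 h1)
  · exact lt_of_le_of_lt (EReal.coe_le_coe_iff.2 h2) hd.2

/-- covering: every point of `J` lies in some `Jᵢ` -/
lemma exists_mem_Ji {x : ℝ} (hx : x ∈ S.J) : ∃ i : Fin n, x ∈ eIoo (a i) (b i) := by
  classical
  have hne : (Finset.univ.filter (fun i : Fin n => a i < (x : EReal))).Nonempty := by
    refine ⟨S.i0, ?_⟩
    simp only [Finset.mem_filter, Finset.mem_univ, true_and]
    exact hx.1
  set s := Finset.univ.filter (fun i : Fin n => a i < (x : EReal)) with hs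
  obtain ⟨i, hi, hmax⟩ := s.exists_max_image id hne
  simp only [Finset.mem_filter, Finset.mem_univ, true_and, hs] at hi
  refine ⟨i, hi, ?_⟩
  by_cases hlast : (i : ℕ) = n - 1
  · have : i = S.iN := Fin.ext hlast
    rw [this]
    exact hx.2
  · have hi1 : (i : ℕ) + 1 < n := by have := i.isLt; have := S.hn; omega
    have hnotin : ¬ (a ⟨(i : ℕ) + 1, hi1⟩ < (x : EReal)) := by
      intro hc
      have hmem : (⟨(i : ℕ) + 1, hi1⟩ : Fin n) ∈ s := by
        simp only [Finset.mem_filter, Finset.mem_univ, true_and, hs]; exact hc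
      have hle := hmax _ hmem
      simp only [id] at hle
      have : (i : ℕ) + 1 ≤ (i : ℕ) := hle
      omega
    push_neg at hnotin
    have h2 := (S.hab.2.1 (i : ℕ) hi1).2.1
    have he : (⟨(i : ℕ), by omega⟩ : Fin n) = i := Fin.ext rfl
    rw [he] at h2
    exact lt_of_le_of_lt hnotin h2

end ChainSetup
end ChainAux

namespace ChainAux

open Filter Topology

/-- generic escape-to-the-bottom lemma -/
lemma exists_pow_lt (φ : HomeoR) (hle : ∀ z, φ z ≤ z) (w t : ℝ)
    (hfix : ∀ z, t ≤ z → z ≤ w → φ z < z) : ∃ m : ℕ, (φ ^ m) w < t := by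
  by_contra hc
  push_neg at hc
  set v : ℕ → ℝ := fun m => (φ ^ m) w with hv
  have hv0 : v 0 = w := rfl
  have hsucc : ∀ m, v (m + 1) = φ (v m) := by
    intro m
    show (φ ^ (m+1)) w = φ ((φ ^ m) w)
    rw [pow_succ']
    rfl
  have hanti : Antitone v := by
    apply antitone_nat_of_succ_le
    intro m
    rw [hsucc]
    exact hle _
  have hbdd : BddBelow (Set.range v) := by
    refine ⟨t, ?_⟩
    rintro y ⟨m, rfl⟩
    exact hc m
  have htend : Tendsto v atTop (𝓝 (⨅ m, v m)) := tendsto_atTop_ciInf hanti hbdd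
  set L := ⨅ m, v m with hL
  have hLt : t ≤ L := le_ciInf fun m => hc m
  have hLw : L ≤ w := by
    rw [← hv0]
    exact ciInf_le hbdd 0
  have hcont : Continuous φ := (OrderIso.toHomeomorph φ).continuous
  have h1 : Tendsto (fun m => v (m + 1)) atTop (𝓝 L) :=
    (tendsto_add_atTop_iff_nat 1).2 htend
  have h2 : Tendsto (fun m => φ (v m)) atTop (𝓝 (φ L)) :=
    (hcont.tendsto L).comp htend
  have h3 : (fun m => v (m + 1)) = fun m => φ (v m) := funext hsucc
  rw [h3] at h1
  have : φ L = L := tendsto_nhds_unique h2 h1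
  exact absurd this (ne_of_lt (hfix L hLt hLw))

/-- extended generator sequence over ℕ -/
def fextF {n : ℕ} (f : Fin n → HomeoR) (k : ℕ) : HomeoR :=
  if h : k < n then f ⟨k, h⟩ else 1

/-- partial pushing products -/
def phiAuxF {n : ℕ} (f : Fin n → HomeoR) : ℕ → HomeoR
  | 0 => 1
  | k+1 => fextF f k * phiAuxF f k

/-- the pushing map -/
def PhiF {n : ℕ} (f : Fin n → HomeoR) : HomeoR := phiAuxF f n

namespace ChainSetup

variable {n : ℕ} {f : Fin n → HomeoR} {a b : Fin n → EReal} {G : Subgroup HomeoR}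
variable (S : ChainSetup f a b G)
include S

lemma f_mem (i : Fin n) : f i ∈ G := by
  rw [S.hG]
  exact Subgroup.subset_closure ⟨i, rfl⟩

/-- custom induction principle for membership in G -/
lemma ind {p : HomeoR → Prop} (gen : ∀ i, p (f i)) (one : p 1)
    (mul : ∀ x y, x ∈ G → y ∈ G → p x → p y → p (x * y))
    (inv : ∀ x, x ∈ G → p x → p x⁻¹) : ∀ g ∈ G, p g := by
  intro g hg
  have hg' : g ∈ Subgroup.closure (Set.range f) := by rwa [← S.hG]
  clear hg
  induction hg' using Subgroup.closure_induction with
  | mem x hx => obtain ⟨i, rfl⟩ := hx; exact gen i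
  | one => exact one
  | mul x y hx hy px py =>
      exact mul x y (by rw [S.hG]; exact hx) (by rw [S.hG]; exact hy) px py
  | inv x hx px => exact inv x (by rw [S.hG]; exact hx) px

lemma supp_subset_J {g : HomeoR} (hg : g ∈ G) : supp g ⊆ S.J := by
  refine S.ind (p := fun g => supp g ⊆ S.J) ?_ ?_ ?_ ?_ g hg
  · intro i
    show supp (f i) ⊆ S.J
    rw [S.hsupp i]
    exact S.Ji_subset_J i
  · show supp (1 : HomeoR) ⊆ S.J
    rw [supp_one]; exact Set.empty_subset _
  · intro x y _ _ px py
    exact (supp_mul_subset x y).trans (Set.union_subset px py)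
  · intro x _ px
    show supp x⁻¹ ⊆ S.J
    rw [supp_inv]; exact px

lemma fix_outside {g : HomeoR} (hg : g ∈ G) {x : ℝ} (hx : x ∉ S.J) : g x = x := by
  by_contra hc
  exact hx (S.supp_subset_J hg hc)

lemma maps_J {g : HomeoR} (hg : g ∈ G) {x : ℝ} (hx : x ∈ S.J) : g x ∈ S.J := by
  by_cases h : g x = x
  · rwa [h]
  · exact S.supp_subset_J hg (apply_mem_supp h)

lemma fext_mem (k : ℕ) : fextF f k ∈ G := by
  unfold fextF
  split
  · exact S.f_mem _
  · exact one_mem G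

lemma fext_le (k : ℕ) (x : ℝ) : x ≤ fextF f k x := by
  unfold fextF
  split
  · exact S.hge _ x
  · exact le_refl x

lemma phiAux_mem (k : ℕ) : phiAuxF f k ∈ G := by
  induction k with
  | zero => exact one_mem G
  | succ m ih => exact mul_mem (S.fext_mem m) ih

lemma phiAux_le (k : ℕ) (x : ℝ) : x ≤ phiAuxF f k x := by
  induction k with
  | zero => exact le_refl x
  | succ m ih =>
      calc x ≤ phiAuxF f m x := ih
        _ ≤ fextF f m (phiAuxF f m x) := S.fext_le m _
        _ = phiAuxF f (m+1) x := rfl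

lemma phiAux_lt {x : ℝ} {i : Fin n} (hx : x ∈ eIoo (a i) (b i)) (k : ℕ)
    (hik : (i : ℕ) < k) : x < phiAuxF f k x := by
  induction k with
  | zero => omega
  | succ m ih =>
      by_cases hc : (i : ℕ) < m
      · calc x < phiAuxF f m x := ih hc
          _ ≤ fextF f m (phiAuxF f m x) := S.fext_le m _
          _ = phiAuxF f (m+1) x := rfl
      · have him : (i : ℕ) = m := by omega
        have h1 : x ≤ phiAuxF f m x := S.phiAux_le m x
        rcases eq_or_lt_of_le h1 with h2 | h2
        · have h3 : fextF f m x = f i x := by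
            unfold fextF
            have hmn : m < n := him ▸ i.isLt
            rw [dif_pos hmn]
            congr 2
            exact Fin.ext him.symm
          have h4 : x < f i x := by
            have h5 := S.hge i x
            rcases eq_or_lt_of_le h5 with h5 | h5
            · exfalso
              have h6 : x ∈ supp (f i) := by rw [S.hsupp i]; exact hx
              exact h6 h5.symm
            · exact h5
          calc x < f i x := h4
            _ = fextF f m x := h3.symm
            _ = fextF f m (phiAuxF f m x) := by rw [← h2]
            _ = phiAuxF f (m+1) x := rfl
        · calc x < phiAuxF f m x := h2
            _ ≤ fextF f m (phiAuxF f m x) := S.fext_le m _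
            _ = phiAuxF f (m+1) x := rfl

lemma Phi_mem : PhiF f ∈ G := S.phiAux_mem n

lemma Phi_le (x : ℝ) : x ≤ PhiF f x := S.phiAux_le n x

lemma Phi_lt {x : ℝ} (hx : x ∈ S.J) : x < PhiF f x := by
  obtain ⟨i, hi⟩ := S.exists_mem_Ji hx
  exact S.phiAux_lt hi n i.isLt

lemma Phi_inv_le (x : ℝ) : (PhiF f)⁻¹ x ≤ x := by
  have h := S.Phi_le ((PhiF f)⁻¹ x)
  rwa [apply_inv_self] at h

lemma Phi_inv_lt {x : ℝ} (hx : x ∈ S.J) : (PhiF f)⁻¹ x < x := by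
  rcases eq_or_lt_of_le (S.Phi_inv_le x) with h | h
  · exfalso
    have h2 : PhiF f x = x := by
      nth_rewrite 1 [← h]; rw [apply_inv_self]
    exact absurd h2 (ne_of_gt (S.Phi_lt hx))
  · exact h

/-- push down past any point of `J` -/
lemma exists_Phi_inv_pow_lt {x y : ℝ} (hx : x ∈ S.J) (hy : y ∈ S.J) :
    ∃ m : ℕ, (((PhiF f)⁻¹) ^ m) x < y := by
  apply exists_pow_lt (PhiF f)⁻¹ S.Phi_inv_le x y
  intro z h1 h2
  exact S.Phi_inv_lt (S.J_convex hy hx h1 h2)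

/-- push up past any point of `J` -/
lemma exists_Phi_pow_gt {x y : ℝ} (hx : x ∈ S.J) (hy : y ∈ S.J) :
    ∃ m : ℕ, y < ((PhiF f) ^ m) x := by
  obtain ⟨m, hm⟩ := S.exists_Phi_inv_pow_lt hy hx
  refine ⟨m, ?_⟩
  have h := ((PhiF f) ^ m).strictMono hm
  rwa [inv_pow, show ((PhiF f) ^ m) ((((PhiF f) ^ m)⁻¹) y) = y from apply_inv_self _ y] at h

end ChainSetup
end ChainAux

namespace ChainAux

lemma one_apply (x : ℝ) : (1 : HomeoR) x = x := rfl

lemma fix_zpow {g : HomeoR} {x : ℝ} (h : g x = x) (k : ℤ) : (g ^ k) x = x := by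
  induction k using Int.induction_on with
  | zero => rfl
  | succ m ih =>
      rw [zpow_add_one]
      show (g ^ (m:ℤ)) (g x) = x
      rw [h]; exact ih
  | pred m ih =>
      rw [zpow_sub_one]
      show (g ^ (-m:ℤ)) (g⁻¹ x) = x
      rw [inv_apply_eq_of h]; exact ih

lemma zpow_mem_supp {g : HomeoR} {x : ℝ} (h : x ∈ supp g) (k : ℤ) :
    (g ^ k) x ∈ supp g := by
  induction k using Int.induction_on with
  | zero => exact h
  | succ m ih =>
      rw [show ((m:ℤ) + 1) = 1 + m by ring, zpow_add, zpow_one]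
      exact apply_mem_supp ih
  | pred m ih =>
      rw [show (-(m:ℤ) - 1) = -1 + -m by ring, zpow_add, zpow_neg_one]
      exact inv_apply_mem_supp ih

lemma zpow_apply_zpow_neg (g : HomeoR) (k : ℤ) (x : ℝ) : (g ^ k) ((g ^ (-k)) x) = x := by
  have h : g ^ k * g ^ (-k) = 1 := by
    rw [← zpow_add]; simp
  calc (g ^ k) ((g ^ (-k)) x) = (g ^ k * g ^ (-k)) x := rfl
    _ = x := by rw [h]; rfl

namespace ChainSetup

variable {n : ℕ} {f : Fin n → HomeoR} {a b : Fin n → EReal} {G : Subgroup HomeoR}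
variable (S : ChainSetup f a b G)
include S

lemma i0_lt_iN : S.i0 < S.iN := by
  show (0 : ℕ) < n - 1
  have := S.hn; omega

lemma exists_real_gt_A : ∃ c : ℝ, S.A < (c : EReal) := by
  obtain ⟨c, hc, _⟩ := EReal.exists_between_coe_real S.A_lt_B
  exact ⟨c, hc⟩

lemma exists_real_lt_B : ∃ c : ℝ, (c : EReal) < S.B := by
  obtain ⟨c, _, hc⟩ := EReal.exists_between_coe_real S.A_lt_B
  exact ⟨c, hc⟩

/-- preservation of being above `A` under powers of the first generator -/
lemma A_lt_zpow_f0 (k : ℤ) {x : ℝ} (hx : S.A < (x : EReal)) :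
    S.A < (((f S.i0 ^ k) x : ℝ) : EReal) := by
  by_cases h : f S.i0 x = x
  · rwa [fix_zpow h k]
  · have h2 : (f S.i0 ^ k) x ∈ supp (f S.i0) := zpow_mem_supp h k
    rw [S.hsupp S.i0] at h2
    exact h2.1

/-- preservation of being below `B` under powers of the last generator -/
lemma zpow_fN_lt_B (k : ℤ) {x : ℝ} (hx : (x : EReal) < S.B) :
    (((f S.iN ^ k) x : ℝ) : EReal) < S.B := by
  by_cases h : f S.iN x = x
  · rwa [fix_zpow h k]
  · have h2 : (f S.iN ^ k) x ∈ supp (f S.iN) := zpow_mem_supp h k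
    rw [S.hsupp S.iN] at h2
    exact h2.2

/-- `g` agrees with the `k`-th power of the first generator near the left end -/
def NA (g : HomeoR) (k : ℤ) : Prop :=
  ∃ c : ℝ, S.A < (c : EReal) ∧ ∀ x : ℝ, x ≤ c → g x = (f S.i0 ^ k) x

/-- `g` agrees with the `k`-th power of the last generator near the right end -/
def NB (g : HomeoR) (k : ℤ) : Prop :=
  ∃ c : ℝ, (c : EReal) < S.B ∧ ∀ x : ℝ, c ≤ x → g x = (f S.iN ^ k) x

lemma NA_one : S.NA 1 0 := by
  obtain ⟨c, hc⟩ := S.exists_real_gt_A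
  exact ⟨c, hc, fun x _ => rfl⟩

lemma NB_one : S.NB 1 0 := by
  obtain ⟨c, hc⟩ := S.exists_real_lt_B
  exact ⟨c, hc, fun x _ => rfl⟩

lemma NA_mul {g h : HomeoR} {k l : ℤ} (hg : S.NA g k) (hh : S.NA h l) :
    S.NA (g * h) (k + l) := by
  obtain ⟨cg, hcg, Hg⟩ := hg
  obtain ⟨ch, hch, Hh⟩ := hh
  refine ⟨min ch ((f S.i0 ^ (-l)) cg), lt_min_iff.2 ⟨hch, S.A_lt_zpow_f0 (-l) hcg⟩, ?_⟩
  intro x hx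
  have hx1 : x ≤ ch := le_trans hx (min_le_left _ _)
  have hx2 : x ≤ (f S.i0 ^ (-l)) cg := le_trans hx (min_le_right _ _)
  have hx3 : (f S.i0 ^ l) x ≤ cg := by
    have := (f S.i0 ^ l).monotone hx2
    rwa [zpow_apply_zpow_neg] at this
  show g (h x) = (f S.i0 ^ (k + l)) x
  rw [Hh x hx1, Hg _ hx3, zpow_add]
  rfl

lemma NB_mul {g h : HomeoR} {k l : ℤ} (hg : S.NB g k) (hh : S.NB h l) :
    S.NB (g * h) (k + l) := by
  obtain ⟨cg, hcg, Hg⟩ := hg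
  obtain ⟨ch, hch, Hh⟩ := hh
  refine ⟨max ch ((f S.iN ^ (-l)) cg), max_lt_iff.2 ⟨hch, S.zpow_fN_lt_B (-l) hcg⟩, ?_⟩
  intro x hx
  have hx1 : ch ≤ x := le_trans (le_max_left _ _) hx
  have hx2 : (f S.iN ^ (-l)) cg ≤ x := le_trans (le_max_right _ _) hx
  have hx3 : cg ≤ (f S.iN ^ l) x := by
    have := (f S.iN ^ l).monotone hx2
    rwa [zpow_apply_zpow_neg] at this
  show g (h x) = (f S.iN ^ (k + l)) x
  rw [Hh x hx1, Hg _ hx3, zpow_add]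
  rfl

lemma NA_inv {g : HomeoR} {k : ℤ} (hg : S.NA g k) : S.NA g⁻¹ (-k) := by
  obtain ⟨c, hc, Hg⟩ := hg
  refine ⟨min c ((f S.i0 ^ k) c), lt_min_iff.2 ⟨hc, S.A_lt_zpow_f0 k hc⟩, ?_⟩
  intro x hx
  have hy : (f S.i0 ^ (-k)) x ≤ c := by
    have h1 : x ≤ (f S.i0 ^ k) c := le_trans hx (min_le_right _ _)
    have h2 := (f S.i0 ^ (-k)).monotone h1
    rwa [show (f S.i0 ^ (-k)) ((f S.i0 ^ k) c) = c by
      simpa using zpow_apply_zpow_neg (f S.i0) (-k) c] at h2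
  have h3 : g ((f S.i0 ^ (-k)) x) = x := by
    rw [Hg _ hy, zpow_apply_zpow_neg]
  calc g⁻¹ x = g⁻¹ (g ((f S.i0 ^ (-k)) x)) := by rw [h3]
    _ = (f S.i0 ^ (-k)) x := by rw [inv_apply_self]

lemma NB_inv {g : HomeoR} {k : ℤ} (hg : S.NB g k) : S.NB g⁻¹ (-k) := by
  obtain ⟨c, hc, Hg⟩ := hg
  refine ⟨max c ((f S.iN ^ k) c), max_lt_iff.2 ⟨hc, S.zpow_fN_lt_B k hc⟩, ?_⟩
  intro x hx
  have hy : c ≤ (f S.iN ^ (-k)) x := by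
    have h1 : (f S.iN ^ k) c ≤ x := le_trans (le_max_right _ _) hx
    have h2 := (f S.iN ^ (-k)).monotone h1
    rwa [show (f S.iN ^ (-k)) ((f S.iN ^ k) c) = c by
      simpa using zpow_apply_zpow_neg (f S.iN) (-k) c] at h2
  have h3 : g ((f S.iN ^ (-k)) x) = x := by
    rw [Hg _ hy, zpow_apply_zpow_neg]
  calc g⁻¹ x = g⁻¹ (g ((f S.iN ^ (-k)) x)) := by rw [h3]
    _ = (f S.iN ^ (-k)) x := by rw [inv_apply_self]

lemma germA {g : HomeoR} (hg : g ∈ G) : ∃ k : ℤ, S.NA g k := by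
  refine S.ind (p := fun g => ∃ k : ℤ, S.NA g k) ?_ ⟨0, S.NA_one⟩ ?_ ?_ g hg
  · intro i
    by_cases h : i = S.i0
    · subst h
      refine ⟨1, ?_⟩
      obtain ⟨c, hc⟩ := S.exists_real_gt_A
      exact ⟨c, hc, fun x _ => by rw [zpow_one]⟩
    · refine ⟨0, ?_⟩
      have hlt : S.A < a i := by
        apply S.a_strict_mono
        show ((S.i0 : Fin n) : ℕ) < (i:ℕ)
        have h0 : ((S.i0 : Fin n) : ℕ) = 0 := rfl
        rw [h0]
        by_contra hc
        exact h (Fin.ext (by rw [h0]; omega))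
      obtain ⟨c, hc1, hc2⟩ := EReal.exists_between_coe_real hlt
      refine ⟨c, hc1, fun x hx => ?_⟩
      have hns : x ∉ supp (f i) := by
        rw [S.hsupp i]
        intro hmem
        exact absurd (hmem.1.trans_le (EReal.coe_le_coe_iff.2 hx)) (not_lt.2 hc2.le)
      rw [zpow_zero]
      exact not_mem_supp.1 hns
  · rintro x y _ _ ⟨k, hk⟩ ⟨l, hl⟩
    exact ⟨k + l, S.NA_mul hk hl⟩
  · rintro x _ ⟨k, hk⟩
    exact ⟨-k, S.NA_inv hk⟩

lemma germB {g : HomeoR} (hg : g ∈ G) : ∃ k : ℤ, S.NB g k := by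
  refine S.ind (p := fun g => ∃ k : ℤ, S.NB g k) ?_ ⟨0, S.NB_one⟩ ?_ ?_ g hg
  · intro i
    by_cases h : i = S.iN
    · subst h
      refine ⟨1, ?_⟩
      obtain ⟨c, hc⟩ := S.exists_real_lt_B
      exact ⟨c, hc, fun x _ => by rw [zpow_one]⟩
    · refine ⟨0, ?_⟩
      have hlt : b i < S.B := by
        apply S.b_strict_mono
        show (i:ℕ) < n - 1
        have h2 := i.isLt
        have h3 : (i : ℕ) ≠ n - 1 := fun hc => h (Fin.ext hc)
        omega
      obtain ⟨c, hc1, hc2⟩ := EReal.exists_between_coe_real hlt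
      refine ⟨c, hc2, fun x hx => ?_⟩
      have hns : x ∉ supp (f i) := by
        rw [S.hsupp i]
        intro hmem
        exact absurd ((EReal.coe_le_coe_iff.2 hx).trans_lt hmem.2) (not_lt.2 hc1.le)
      rw [zpow_zero]
      exact not_mem_supp.1 hns
  · rintro x y _ _ ⟨k, hk⟩ ⟨l, hl⟩
    exact ⟨k + l, S.NB_mul hk hl⟩
  · rintro x _ ⟨k, hk⟩
    exact ⟨-k, S.NB_inv hk⟩

/-- commutators of elements of `G` are trivial near the left end -/
lemma commutator_trivA {g h : HomeoR} (hg : g ∈ G) (hh : h ∈ G) :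
    ∃ c : ℝ, S.A < (c : EReal) ∧ ∀ x : ℝ, x ≤ c → ⁅g, h⁆ x = x := by
  obtain ⟨k, hk⟩ := S.germA hg
  obtain ⟨l, hl⟩ := S.germB hg  -- dummy; not needed
  obtain ⟨l', hl'⟩ := S.germA hh
  have h1 : S.NA (g * h * g⁻¹ * h⁻¹) (k + l' + -k + -l') :=
    S.NA_mul (S.NA_mul (S.NA_mul hk hl') (S.NA_inv hk)) (S.NA_inv hl')
  obtain ⟨c, hc, H⟩ := h1
  refine ⟨c, hc, fun x hx => ?_⟩
  have h2 := H x hx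
  rw [show k + l' + -k + -l' = 0 by ring, zpow_zero] at h2
  rw [commutatorElement_def]
  exact h2

/-- commutators of elements of `G` are trivial near the right end -/
lemma commutator_trivB {g h : HomeoR} (hg : g ∈ G) (hh : h ∈ G) :
    ∃ c : ℝ, (c : EReal) < S.B ∧ ∀ x : ℝ, c ≤ x → ⁅g, h⁆ x = x := by
  obtain ⟨k, hk⟩ := S.germB hg
  obtain ⟨l', hl'⟩ := S.germB hh
  have h1 : S.NB (g * h * g⁻¹ * h⁻¹) (k + l' + -k + -l') :=
    S.NB_mul (S.NB_mul (S.NB_mul hk hl') (S.NB_inv hk)) (S.NB_inv hl')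
  obtain ⟨c, hc, H⟩ := h1
  refine ⟨c, hc, fun x hx => ?_⟩
  have h2 := H x hx
  rw [show k + l' + -k + -l' = 0 by ring, zpow_zero] at h2
  rw [commutatorElement_def]
  exact h2

/-- the subgroup of boundary-trivial elements of `G` -/
def TS : Subgroup HomeoR where
  carrier := {g | g ∈ G ∧ ∃ c d : ℝ, S.A < (c : EReal) ∧ (d : EReal) < S.B ∧
    ∀ x : ℝ, (x ≤ c ∨ d ≤ x) → g x = x}
  one_mem' := by
    obtain ⟨c, hc⟩ := S.exists_real_gt_A
    obtain ⟨d, hd⟩ := S.exists_real_lt_B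
    exact ⟨one_mem G, c, d, hc, hd, fun x _ => rfl⟩
  mul_mem' := by
    rintro g h ⟨hgG, cg, dg, hcg, hdg, Hg⟩ ⟨hhG, ch, dh, hch, hdh, Hh⟩
    refine ⟨mul_mem hgG hhG, min cg ch, max dg dh,
      lt_min_iff.2 ⟨hcg, hch⟩, max_lt_iff.2 ⟨hdg, hdh⟩, ?_⟩
    intro x hx
    have hh1 : h x = x := by
      apply Hh
      rcases hx with h1 | h1
      · exact Or.inl (le_trans h1 (min_le_right _ _))
      · exact Or.inr (le_trans (le_max_right _ _) h1)
    have hg1 : g x = x := by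
      apply Hg
      rcases hx with h1 | h1
      · exact Or.inl (le_trans h1 (min_le_left _ _))
      · exact Or.inr (le_trans (le_max_left _ _) h1)
    show g (h x) = x
    rw [hh1, hg1]
  inv_mem' := by
    rintro g ⟨hgG, c, d, hc, hd, Hg⟩
    exact ⟨inv_mem hgG, c, d, hc, hd, fun x hx => inv_apply_eq_of (Hg x hx)⟩

lemma mem_TS_iff {g : HomeoR} : g ∈ S.TS ↔ g ∈ G ∧ ∃ c d : ℝ,
    S.A < (c : EReal) ∧ (d : EReal) < S.B ∧ ∀ x : ℝ, (x ≤ c ∨ d ≤ x) → g x = x :=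
  Iff.rfl

/-- the commutator subgroup is boundary-trivial -/
lemma commutator_le_TS : ⁅G, G⁆ ≤ S.TS := by
  rw [Subgroup.commutator_le]
  intro g hg h hh
  obtain ⟨c, hc, Hc⟩ := S.commutator_trivA hg hh
  obtain ⟨d, hd, Hd⟩ := S.commutator_trivB hg hh
  refine ⟨by
      rw [commutatorElement_def]
      exact mul_mem (mul_mem (mul_mem hg hh) (inv_mem hg)) (inv_mem hh), c, d, hc, hd, ?_⟩
  intro x hx
  rcases hx with h1 | h1
  · exact Hc x h1
  · exact Hd x h1

end ChainSetup
end ChainAux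

namespace ChainAux

/-- preservation of a predicate under powers -/
lemma pow_preserve (φ : HomeoR) (P : ℝ → Prop) (h : ∀ w, P w → P (φ w)) :
    ∀ (k : ℕ) (w : ℝ), P w → P ((φ ^ k) w) := by
  intro k
  induction k with
  | zero => intro w hw; exact hw
  | succ m ih =>
      intro w hw
      rw [pow_succ']
      exact h _ (ih w hw)

lemma pow_apply_pow_inv (g : HomeoR) (k : ℕ) (x : ℝ) : (g ^ k) (((g ^ k)⁻¹) x) = x :=
  apply_inv_self _ x

/-- the key computation for commutator-localization:
`⁅g, h⁆ x = g x` whenever `h⁻¹ x ∉ supp g`. -/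
lemma comm_loc_apply (g h : HomeoR) {x : ℝ} (hx : h⁻¹ x ∉ supp g) :
    ⁅g, h⁆ x = g x := by
  rw [commutatorElement_def]
  show g (h (g⁻¹ (h⁻¹ x))) = g x
  rw [show g⁻¹ (h⁻¹ x) = h⁻¹ x from inv_apply_eq_of (not_mem_supp.1 hx),
    apply_inv_self]

/-- support of the localizing commutator -/
lemma comm_loc_supp (g h : HomeoR) :
    supp ⁅g, h⁆ ⊆ supp g ∪ (fun y => h y) '' supp g := by
  intro x hx
  have h1 : ⁅g, h⁆ = g * (h * g⁻¹ * h⁻¹) := by group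
  rw [h1] at hx
  rcases supp_mul_subset _ _ hx with h2 | h2
  · exact Or.inl h2
  · right
    have h3 : supp (h * g⁻¹ * h⁻¹) = h '' supp g⁻¹ := supp_conj h g⁻¹
    rw [h3, supp_inv] at h2
    exact h2


namespace ChainSetup

variable {n : ℕ} {f : Fin n → HomeoR} {a b : Fin n → EReal} {G : Subgroup HomeoR}
variable (S : ChainSetup f a b G)
include S

lemma a_real {i : Fin n} (h : i ≠ S.i0) : ∃ r : ℝ, (r : EReal) = a i ∧ r ∈ S.J := by
  have h1 : S.A < a i := by
    apply S.a_strict_mono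
    show ((S.i0 : Fin n) : ℕ) < (i : ℕ)
    have h0 : ((S.i0 : Fin n) : ℕ) = 0 := rfl
    rw [h0]
    by_contra hc
    exact h (Fin.ext (by rw [h0]; omega))
  have h2 : a i < S.B := S.a_lt_B i
  have hbot : a i ≠ ⊥ := fun hc => by
    rw [hc] at h1; exact absurd h1 (by simp)
  have htop : a i ≠ ⊤ := fun hc => by
    rw [hc] at h2
    exact absurd h2 (by simp)
  refine ⟨(a i).toReal, EReal.coe_toReal htop hbot, ?_⟩
  constructor
  · rw [EReal.coe_toReal htop hbot]; exact h1
  · rw [EReal.coe_toReal htop hbot]; exact h2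

lemma b_real {i : Fin n} (h : i ≠ S.iN) : ∃ r : ℝ, (r : EReal) = b i ∧ r ∈ S.J := by
  have h2 : b i < S.B := by
    apply S.b_strict_mono
    show (i : ℕ) < ((S.iN : Fin n) : ℕ)
    have h0 : ((S.iN : Fin n) : ℕ) = n - 1 := rfl
    rw [h0]
    have h3 : (i : ℕ) ≠ n - 1 := fun hc => h (Fin.ext (by rw [h0]; omega))
    have := i.isLt
    omega
  have h1 : S.A < b i := S.A_lt_b i
  have hbot : b i ≠ ⊥ := fun hc => by
    rw [hc] at h1; exact absurd h1 (by simp)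
  have htop : b i ≠ ⊤ := fun hc => by
    rw [hc] at h2; exact absurd h2 (by simp)
  refine ⟨(b i).toReal, EReal.coe_toReal htop hbot, ?_⟩
  constructor
  · rw [EReal.coe_toReal htop hbot]; exact h1
  · rw [EReal.coe_toReal htop hbot]; exact h2

/-- localization of a generator to a compact set, pushing right -/
lemma gen_loc (i : Fin n) {c d : ℝ} (hc : c ∈ S.J) (hd : d ∈ S.J) :
    ∃ σ : HomeoR, σ ∈ (⁅G, G⁆ : Subgroup HomeoR) ∧
      ∀ x : ℝ, c ≤ x → x ≤ d → σ x = f i x := by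
  by_cases hiN : i = S.iN
  · -- push left below the (real) left endpoint of the last interval
    have hi0 : i ≠ S.i0 := by
      rw [hiN]
      intro hc2
      have h1 := S.i0_lt_iN
      rw [← hc2] at h1
      exact lt_irrefl _ h1
    obtain ⟨r, hr, hrJ⟩ := S.a_real hi0
    obtain ⟨m, hm⟩ := S.exists_Phi_inv_pow_lt hd hrJ
    refine ⟨⁅f i, (PhiF f) ^ m⁆, Subgroup.commutator_mem_commutator (S.f_mem i)
      (pow_mem S.Phi_mem m), ?_⟩
    intro x hx1 hx2
    apply comm_loc_apply
    rw [S.hsupp i]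
    intro hmem
    have h2 : ((PhiF f) ^ m)⁻¹ x ≤ (((PhiF f)⁻¹) ^ m) d := by
      rw [inv_pow]
      exact ((PhiF f) ^ m)⁻¹.monotone hx2
    have h3 : ((PhiF f) ^ m)⁻¹ x < r := lt_of_le_of_lt h2 hm
    have h4 : (((((PhiF f) ^ m)⁻¹) x : ℝ) : EReal) < a i := by
      rw [← hr]
      exact_mod_cast h3
    exact absurd hmem.1 (not_lt.2 (le_of_lt h4))
  · -- push right above the (real) right endpoint of interval i
    obtain ⟨r, hr, hrJ⟩ := S.b_real hiN
    obtain ⟨m, hm⟩ := S.exists_Phi_pow_gt hc hrJ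
    refine ⟨⁅f i, ((PhiF f) ^ m)⁻¹⁆, Subgroup.commutator_mem_commutator (S.f_mem i)
      (inv_mem (pow_mem S.Phi_mem m)), ?_⟩
    intro x hx1 hx2
    apply comm_loc_apply
    rw [S.hsupp i]
    intro hmem
    rw [inv_inv] at hmem
    have h2 : ((PhiF f) ^ m) c ≤ ((PhiF f) ^ m) x := ((PhiF f) ^ m).monotone hx1
    have h3 : r < ((PhiF f) ^ m) x := lt_of_lt_of_le hm h2
    have h4 : b i < ((((PhiF f) ^ m) x : ℝ) : EReal) := by
      rw [← hr]
      exact_mod_cast h3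
    exact absurd hmem.2 (not_lt.2 (le_of_lt h4))

/-- localization of arbitrary elements of `G` on compact subsets of `J`:
an element of the commutator subgroup agreeing with it there. -/
lemma loc {ρ : HomeoR} (hρ : ρ ∈ G) :
    ∀ c d : ℝ, c ∈ S.J → d ∈ S.J →
      ∃ σ : HomeoR, σ ∈ (⁅G, G⁆ : Subgroup HomeoR) ∧
        ∀ x : ℝ, c ≤ x → x ≤ d → σ x = ρ x := by
  refine S.ind (p := fun ρ => ∀ c d : ℝ, c ∈ S.J → d ∈ S.J →
    ∃ σ : HomeoR, σ ∈ (⁅G, G⁆ : Subgroup HomeoR) ∧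
      ∀ x : ℝ, c ≤ x → x ≤ d → σ x = ρ x) ?_ ?_ ?_ ?_ ρ hρ
  · intro i c d hc hd
    exact S.gen_loc i hc hd
  · intro c d hc hd
    exact ⟨1, one_mem _, fun x _ _ => rfl⟩
  · intro x y hxG hyG px py
    intro c d hc hd
    obtain ⟨σ₂, hσ₂, H₂⟩ := py c d hc hd
    obtain ⟨σ₁, hσ₁, H₁⟩ := px (y c) (y d) (S.maps_J hyG hc) (S.maps_J hyG hd)
    refine ⟨σ₁ * σ₂, mul_mem hσ₁ hσ₂, ?_⟩
    intro z h1 h2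
    show σ₁ (σ₂ z) = x (y z)
    rw [H₂ z h1 h2, H₁ (y z) (y.monotone h1) (y.monotone h2)]
  · intro x hxG px
    intro c d hc hd
    have hxiG : x⁻¹ ∈ G := inv_mem hxG
    obtain ⟨σ, hσ, H⟩ := px (x⁻¹ c) (x⁻¹ d) (S.maps_J hxiG hc) (S.maps_J hxiG hd)
    refine ⟨σ⁻¹, inv_mem hσ, ?_⟩
    intro z h1 h2
    have h3 : σ (x⁻¹ z) = z := by
      rw [H (x⁻¹ z) (x⁻¹.monotone h1) (x⁻¹.monotone h2), apply_inv_self]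
    calc σ⁻¹ z = σ⁻¹ (σ (x⁻¹ z)) := by rw [h3]
      _ = x⁻¹ z := by rw [inv_apply_self]

/-- the real left endpoint of the last interval -/
noncomputable def qN : ℝ := (a S.iN).toReal

lemma qN_spec : ((S.qN : ℝ) : EReal) = a S.iN ∧ S.qN ∈ S.J := by
  have h := S.a_real (i := S.iN) (by
    intro hc2
    have h1 := S.i0_lt_iN
    rw [hc2] at h1
    exact lt_irrefl _ h1)
  obtain ⟨r, hr, hrJ⟩ := h
  have : S.qN = r := by
    unfold qN
    rw [← hr]
    simp
  rw [this]
  exact ⟨hr, hrJ⟩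

/-- compression of compact subsets of `J` into arbitrary small intervals,
given density of the orbit of `qN` -/
lemma compress
    (hdense : ∀ u₁ u₂ : ℝ, u₁ ∈ S.J → u₂ ∈ S.J → u₁ < u₂ →
      ∃ g, g ∈ G ∧ u₁ < g S.qN ∧ g S.qN < u₂)
    {c d p r : ℝ} (hc : c ∈ S.J) (hd : d ∈ S.J) (hp : p ∈ S.J) (hr : r ∈ S.J)
    (hpr : p < r) :
    ∃ ρ, ρ ∈ G ∧ ∀ z : ℝ, c ≤ z → z ≤ d → p < ρ z ∧ ρ z < r := by
  obtain ⟨hqNc, hqNJ⟩ := S.qN_spec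
  -- choose u₁ < u₂ inside (p, r)
  obtain ⟨u₁, hu₁a, hu₁b⟩ := exists_between hpr
  obtain ⟨u₂, hu₂a, hu₂b⟩ := exists_between hu₁b
  have hu₁J : u₁ ∈ S.J := S.J_convex hp hr (le_of_lt hu₁a) (le_of_lt hu₁b)
  have hu₂J : u₂ ∈ S.J := S.J_convex hp hr (le_of_lt (lt_trans hu₁a hu₂a))
    (le_of_lt hu₂b)
  obtain ⟨g, hgG, hg1, hg2⟩ := hdense u₁ u₂ hu₁J hu₂J hu₂a
  set t := g⁻¹ u₂ with ht
  have hqt : S.qN < t := by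
    have := g⁻¹.strictMono hg2
    rwa [inv_apply_self] at this
  -- stage 1 : push [c, d] to the right of qN
  obtain ⟨m, hm⟩ := S.exists_Phi_pow_gt hc hqNJ
  -- stage 2 : bring it down close to qN using the last generator
  have hfNile : ∀ z : ℝ, (f S.iN)⁻¹ z ≤ z := by
    intro z
    have := (f S.iN)⁻¹.monotone (S.hge S.iN z)
    rwa [inv_apply_self] at this
  have hPhidJ : ((PhiF f) ^ m) d ∈ S.J := S.maps_J (pow_mem S.Phi_mem m) hd
  have hside : ∀ z : ℝ, t ≤ z → z ≤ ((PhiF f) ^ m) d → (f S.iN)⁻¹ z < z := by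
    intro z hz1 hz2
    have hzsupp : z ∈ supp (f S.iN) := by
      rw [S.hsupp S.iN]
      constructor
      · rw [← hqNc]
        exact_mod_cast lt_of_lt_of_le hqt hz1
      · calc ((z : ℝ) : EReal) ≤ ((((PhiF f) ^ m) d : ℝ) : EReal) := by exact_mod_cast hz2
          _ < S.B := hPhidJ.2
    have h5 : (f S.iN)⁻¹ z ≠ z := by
      rw [← supp_inv] at hzsupp
      exact hzsupp
    exact lt_of_le_of_ne (hfNile z) h5
  obtain ⟨k, hk⟩ := exists_pow_lt (f S.iN)⁻¹ hfNile (((PhiF f) ^ m) d) t hside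
  refine ⟨g * ((f S.iN)⁻¹ ^ k) * ((PhiF f) ^ m), mul_mem (mul_mem hgG
    (pow_mem (inv_mem (S.f_mem S.iN)) k)) (pow_mem S.Phi_mem m), ?_⟩
  intro z h1 h2
  have hz1 : S.qN < ((PhiF f) ^ m) z := by
    calc S.qN < ((PhiF f) ^ m) c := hm
      _ ≤ ((PhiF f) ^ m) z := ((PhiF f) ^ m).monotone h1
  -- (f iN)⁻¹ preserves being > qN
  have hpres : ∀ w : ℝ, S.qN < w → S.qN < (f S.iN)⁻¹ w := by
    intro w hw
    by_cases hsup : w ∈ supp (f S.iN)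
    · have h3 := inv_apply_mem_supp hsup
      rw [S.hsupp S.iN] at h3
      have h4 := h3.1
      rw [← hqNc] at h4
      exact_mod_cast h4
    · rw [not_mem_supp] at hsup
      rwa [inv_apply_eq_of hsup]
  have hz2 : S.qN < ((f S.iN)⁻¹ ^ k) (((PhiF f) ^ m) z) :=
    pow_preserve (f S.iN)⁻¹ (fun w => S.qN < w) hpres k _ hz1
  have hz3 : ((f S.iN)⁻¹ ^ k) (((PhiF f) ^ m) z) < t := by
    calc ((f S.iN)⁻¹ ^ k) (((PhiF f) ^ m) z)
        ≤ ((f S.iN)⁻¹ ^ k) (((PhiF f) ^ m) d) :=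
          ((f S.iN)⁻¹ ^ k).monotone (((PhiF f) ^ m).monotone h2)
      _ < t := hk
  constructor
  · show p < g (((f S.iN)⁻¹ ^ k) (((PhiF f) ^ m) z))
    calc p < u₁ := hu₁a
      _ < g S.qN := hg1
      _ < g (((f S.iN)⁻¹ ^ k) (((PhiF f) ^ m) z)) := g.strictMono hz2
  · show g (((f S.iN)⁻¹ ^ k) (((PhiF f) ^ m) z)) < r
    calc g (((f S.iN)⁻¹ ^ k) (((PhiF f) ^ m) z)) < g t := g.strictMono hz3
      _ = u₂ := by rw [ht, apply_inv_self]
      _ < r := hu₂b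

/-- the basic nontrivial commutator -/
lemma c0_ne_one : ⁅f S.i0, f ⟨1, by have := S.hn; omega⟩⁆ ≠ (1 : HomeoR) := by
  set i1 : Fin n := ⟨1, by have := S.hn; omega⟩ with hi1
  intro hcomm
  rw [commutatorElement_eq_one_iff_commute] at hcomm
  -- conjugation fixes the support of f i0
  have hconj : f i1 * f S.i0 * (f i1)⁻¹ = f S.i0 := by
    rw [← hcomm.eq]
    group
  have hsupp_eq : (fun y => f i1 y) '' supp (f S.i0) = supp (f S.i0) := by
    rw [← supp_conj (f i1) (f S.i0), hconj]
  -- the chain inequalities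
  have hch := S.hab.2.1 0 (by have := S.hn; omega)
  have h01 : (⟨0, by have := S.hn; omega⟩ : Fin n) = S.i0 := Fin.ext rfl
  have h11 : (⟨0 + 1, by have := S.hn; omega⟩ : Fin n) = i1 := Fin.ext rfl
  rw [h01, h11] at hch
  obtain ⟨hab1, hab2, hab3⟩ := hch
  -- real version of b (i0)
  have hi0N : S.i0 ≠ S.iN := ne_of_lt S.i0_lt_iN
  obtain ⟨r, hr, hrJ⟩ := S.b_real hi0N
  -- r ∈ supp f i1
  have hrsupp : r ∈ supp (f i1) := by
    rw [S.hsupp i1]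
    exact ⟨by rw [hr]; exact hab2, by rw [hr]; exact hab3⟩
  -- y := f i1 r > r
  have hy : r < f i1 r := lt_of_le_of_ne (S.hge i1 r) (Ne.symm hrsupp)
  -- pick z between r and y, x := (f i1)⁻¹ z
  obtain ⟨z, hz1, hz2⟩ := exists_between hy
  set x := (f i1)⁻¹ z with hx
  have hxr : x < r := by
    have := (f i1)⁻¹.strictMono hz2
    rwa [inv_apply_self] at this
  have hzsupp : z ∈ supp (f i1) := by
    rw [S.hsupp i1]
    constructor
    · calc a i1 < b S.i0 := hab2
        _ = ((r:ℝ):EReal) := hr.symm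
        _ < ((z:ℝ):EReal) := by exact_mod_cast hz1
    · have hysupp := apply_mem_supp hrsupp
      rw [S.hsupp i1] at hysupp
      calc ((z:ℝ):EReal) < ((f i1 r : ℝ):EReal) := by exact_mod_cast hz2
        _ < b i1 := hysupp.2
  have hxsupp : x ∈ supp (f i1) := inv_apply_mem_supp hzsupp
  -- x ∈ supp f i0
  have hxsupp0 : x ∈ supp (f S.i0) := by
    rw [S.hsupp S.i0]
    constructor
    · rw [S.hsupp i1] at hxsupp
      calc S.A = a S.i0 := rfl
        _ < a i1 := hab1
        _ < ((x:ℝ):EReal) := hxsupp.1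
    · calc ((x:ℝ):EReal) < ((r:ℝ):EReal) := by exact_mod_cast hxr
        _ = b S.i0 := hr
  -- but f i1 x = z ∉ supp f i0
  have hznot : z ∉ supp (f S.i0) := by
    rw [S.hsupp S.i0]
    intro hmem
    have h6 : b S.i0 < ((z:ℝ):EReal) := by
      rw [← hr]
      exact_mod_cast hz1
    exact absurd hmem.2 (not_lt.2 (le_of_lt h6))
  apply hznot
  rw [← hsupp_eq]
  refine ⟨x, hxsupp0, ?_⟩
  show f i1 ((f i1)⁻¹ z) = z
  rw [apply_inv_self]

end ChainSetup
end ChainAux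

namespace ChainAux

section GroupIdentities
variable {Γ : Type*} [Group Γ]

lemma comm_mul_left (x y z : Γ) : ⁅x*y, z⁆ = (x * ⁅y,z⁆ * x⁻¹) * ⁅x,z⁆ := by group
lemma comm_mul_right (x y z : Γ) : ⁅x, y*z⁆ = ⁅x,y⁆ * (y * ⁅x,z⁆ * y⁻¹) := by group
lemma comm_inv_left (x y : Γ) : ⁅x⁻¹, y⁆ = x⁻¹ * ⁅x,y⁆⁻¹ * x := by group
lemma comm_inv_right (x y : Γ) : ⁅x, y⁻¹⁆ = y⁻¹ * ⁅x,y⁆⁻¹ * y := by group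
lemma comm_self (x : Γ) : ⁅x, x⁆ = 1 := by group
lemma comm_one_left (y : Γ) : ⁅(1:Γ), y⁆ = 1 := by group
lemma comm_one_right (y : Γ) : ⁅y, (1:Γ)⁆ = 1 := by group
lemma conj_comm (σ u v : Γ) : ⁅σ*u*σ⁻¹, σ*v*σ⁻¹⁆ = σ * ⁅u,v⁆ * σ⁻¹ := by group

end GroupIdentities

namespace ChainSetup

variable {n : ℕ} {f : Fin n → HomeoR} {a b : Fin n → EReal} {G : Subgroup HomeoR}
variable (S : ChainSetup f a b G)
include S

lemma pow_Phi_le (m : ℕ) (x : ℝ) : x ≤ ((PhiF f) ^ m) x := by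
  induction m with
  | zero => exact le_refl x
  | succ k ih =>
      rw [pow_succ']
      calc x ≤ ((PhiF f) ^ k) x := ih
        _ ≤ PhiF f (((PhiF f) ^ k) x) := S.Phi_le _
        _ = (PhiF f * (PhiF f) ^ k) x := rfl

lemma pow_Phi_inv_le (m : ℕ) (x : ℝ) : (((PhiF f) ^ m)⁻¹) x ≤ x := by
  have h := S.pow_Phi_le m ((((PhiF f) ^ m)⁻¹) x)
  rwa [apply_inv_self] at h

/-- conjugation by an element of `G` preserves `⁅G, G⁆` -/
lemma conj_mem_D {g u : HomeoR} (hg : g ∈ G) (hu : u ∈ (⁅G, G⁆ : Subgroup HomeoR)) :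
    g * u * g⁻¹ ∈ (⁅G, G⁆ : Subgroup HomeoR) := by
  have key : (⁅G, G⁆ : Subgroup HomeoR) ≤
      (⁅G, G⁆ : Subgroup HomeoR).comap (MulAut.conj g).toMonoidHom := by
    rw [Subgroup.commutator_le]
    intro x hx y hy
    rw [Subgroup.mem_comap, map_commutatorElement]
    apply Subgroup.commutator_mem_commutator
    · simpa [MulAut.conj_apply] using mul_mem (mul_mem hg hx) (inv_mem hg)
    · simpa [MulAut.conj_apply] using mul_mem (mul_mem hg hy) (inv_mem hg)
  have h2 := key hu
  rw [Subgroup.mem_comap] at h2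
  simpa [MulAut.conj_apply] using h2

/-- conjugation by an element of `G` preserves `⁅⁅G,G⁆, ⁅G,G⁆⁆` -/
lemma conj_mem_E {g u : HomeoR} (hg : g ∈ G)
    (hu : u ∈ (⁅(⁅G, G⁆ : Subgroup HomeoR), (⁅G, G⁆ : Subgroup HomeoR)⁆ : Subgroup HomeoR)) :
    g * u * g⁻¹ ∈ (⁅(⁅G, G⁆ : Subgroup HomeoR), (⁅G, G⁆ : Subgroup HomeoR)⁆ : Subgroup HomeoR) := by
  set D := (⁅G, G⁆ : Subgroup HomeoR)
  have key : (⁅D, D⁆ : Subgroup HomeoR) ≤ (⁅D, D⁆ : Subgroup HomeoR).comap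
      (MulAut.conj g).toMonoidHom := by
    rw [Subgroup.commutator_le]
    intro x hx y hy
    rw [Subgroup.mem_comap, map_commutatorElement]
    apply Subgroup.commutator_mem_commutator
    · simpa [MulAut.conj_apply] using S.conj_mem_D hg hx
    · simpa [MulAut.conj_apply] using S.conj_mem_D hg hy
  have h2 := key hu
  rw [Subgroup.mem_comap] at h2
  simpa [MulAut.conj_apply] using h2

lemma far_commute {i j : Fin n} (h : (i : ℕ) + 2 ≤ (j : ℕ)) : ⁅f i, f j⁆ = 1 := by
  rw [commutatorElement_eq_one_iff_commute]
  have hij : b i ≤ a j := by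
    have h2 : (i : ℕ) + 2 < n := by have := j.isLt; omega
    have h3 := S.hab.2.2 (i : ℕ) h2
    have he : (⟨(i:ℕ), by omega⟩ : Fin n) = i := Fin.ext rfl
    rw [he] at h3
    calc b i ≤ a ⟨(i:ℕ)+2, h2⟩ := h3
      _ ≤ a j := S.a_mono _ _ (by show (i:ℕ)+2 ≤ (j:ℕ); exact h)
  have hdisj : Disjoint (supp (f i)) (supp (f j)) := by
    rw [Set.disjoint_left]
    intro x hx1 hx2
    rw [S.hsupp i] at hx1
    rw [S.hsupp j] at hx2
    exact absurd (lt_of_le_of_lt (le_trans (le_of_lt hx1.2) hij) hx2.1) (lt_irrefl _)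
  exact commute_of_disjoint_supp hdisj

/-- consecutive commutators lie in the double commutator subgroup -/
lemma ci_mem (i : ℕ) (hi : i + 1 < n) :
    ⁅f ⟨i, by omega⟩, f ⟨i+1, hi⟩⁆ ∈
      (⁅(⁅G, G⁆ : Subgroup HomeoR), (⁅G, G⁆ : Subgroup HomeoR)⁆ : Subgroup HomeoR) := by
  set ii : Fin n := ⟨i, by omega⟩ with hii
  set ii1 : Fin n := ⟨i+1, hi⟩ with hii1
  have hii1_ne0 : ii1 ≠ S.i0 := by
    intro hc
    have : ((ii1 : Fin n) : ℕ) = ((S.i0 : Fin n) : ℕ) := by rw [hc]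
    simp only [hii1] at this
    exact absurd this (by show i + 1 ≠ 0; omega)
  have hii_neN : ii ≠ S.iN := by
    intro hc
    have : ((ii : Fin n) : ℕ) = ((S.iN : Fin n) : ℕ) := by rw [hc]
    have h2 : ((S.iN : Fin n) : ℕ) = n - 1 := rfl
    rw [h2] at this
    simp only [hii] at this
    omega
  obtain ⟨r₁, hr₁, hr₁J⟩ := S.a_real hii1_ne0
  obtain ⟨r₂, hr₂, hr₂J⟩ := S.b_real hii_neN
  -- σ agrees with f ii on [r₁, ∞), supported in (-∞, r₂)
  obtain ⟨m₁, hm₁⟩ := S.exists_Phi_pow_gt hr₁J hr₂J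
  set σ : HomeoR := ⁅f ii, ((PhiF f) ^ m₁)⁻¹⁆ with hσ
  have hσD : σ ∈ (⁅G, G⁆ : Subgroup HomeoR) :=
    Subgroup.commutator_mem_commutator (S.f_mem ii) (inv_mem (pow_mem S.Phi_mem m₁))
  have hσ_agree : ∀ x : ℝ, r₁ ≤ x → σ x = f ii x := by
    intro x hx
    apply comm_loc_apply
    rw [inv_inv, S.hsupp ii]
    intro hmem
    have h2 : r₂ < ((PhiF f) ^ m₁) x :=
      lt_of_lt_of_le hm₁ (((PhiF f) ^ m₁).monotone hx)
    have h3 : b ii < ((((PhiF f) ^ m₁) x : ℝ) : EReal) := by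
      rw [← hr₂]; exact_mod_cast h2
    exact absurd hmem.2 (not_lt.2 (le_of_lt h3))
  have hσ_supp : ∀ x ∈ supp σ, x < r₂ := by
    intro x hx
    rcases comm_loc_supp (f ii) (((PhiF f) ^ m₁)⁻¹) hx with h2 | h2
    · rw [S.hsupp ii] at h2
      have h3 : ((x:ℝ):EReal) < ((r₂:ℝ):EReal) := by rw [hr₂]; exact h2.2
      exact_mod_cast h3
    · obtain ⟨y, hy, rfl⟩ := h2
      rw [S.hsupp ii] at hy
      have h3 : (y:EReal) < ((r₂:ℝ):EReal) := by rw [hr₂]; exact hy.2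
      have h4 : y < r₂ := by exact_mod_cast h3
      exact lt_of_le_of_lt (S.pow_Phi_inv_le m₁ y) h4
  -- σ'' agrees with f ii1 on (-∞, r₂]
  obtain ⟨m₂, hm₂⟩ := S.exists_Phi_inv_pow_lt hr₂J hr₁J
  set σ'' : HomeoR := ⁅f ii1, (PhiF f) ^ m₂⁆ with hσ''
  have hσ''D : σ'' ∈ (⁅G, G⁆ : Subgroup HomeoR) :=
    Subgroup.commutator_mem_commutator (S.f_mem ii1) (pow_mem S.Phi_mem m₂)
  have hσ''_agree : ∀ x : ℝ, x ≤ r₂ → σ'' x = f ii1 x := by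
    intro x hx
    apply comm_loc_apply
    rw [S.hsupp ii1]
    intro hmem
    have h2 : ((PhiF f) ^ m₂)⁻¹ x ≤ r₁ := by
      rcases le_total x r₁ with h3 | h3
      · exact le_trans (S.pow_Phi_inv_le m₂ x) h3
      · have h4 : ((PhiF f) ^ m₂)⁻¹ x ≤ ((PhiF f) ^ m₂)⁻¹ r₂ :=
          ((PhiF f) ^ m₂)⁻¹.monotone hx
        rw [inv_pow] at hm₂
        exact le_trans h4 (le_of_lt hm₂)
    have h3 : ((((PhiF f) ^ m₂)⁻¹ x : ℝ) : EReal) ≤ a ii1 := by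
      rw [← hr₁]; exact_mod_cast h2
    exact absurd hmem.1 (not_lt.2 h3)
  -- now rewrite the commutator
  have step1 : ⁅f ii, f ii1⁆ = ⁅σ, f ii1⁆ := by
    apply commutator_eq_of_eqOn
    intro x hx
    apply hσ_agree
    rw [S.hsupp ii1] at hx
    have h2 : ((r₁:ℝ):EReal) < ((x:ℝ):EReal) := by rw [hr₁]; exact hx.1
    exact le_of_lt (by exact_mod_cast h2)
  have step3 : ⁅f ii1, σ⁆ = ⁅σ'', σ⁆ := by
    apply commutator_eq_of_eqOn
    intro x hx
    exact hσ''_agree x (le_of_lt (hσ_supp x hx))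
  rw [step1, ← inv_inv ⁅σ, f ii1⁆, commutatorElement_inv, step3]
  exact inv_mem (Subgroup.commutator_mem_commutator hσ''D hσD)

/-- consecutive commutators, index-free version -/
lemma ci_mem' {i j : Fin n} (h2 : (j:ℕ) = (i:ℕ)+1) :
    ⁅f i, f j⁆ ∈
      (⁅(⁅G, G⁆ : Subgroup HomeoR), (⁅G, G⁆ : Subgroup HomeoR)⁆ : Subgroup HomeoR) := by
  have h3 : (i:ℕ)+1 < n := by rw [← h2]; exact j.isLt
  have key := S.ci_mem (i:ℕ) h3
  have e1 : (⟨(i:ℕ), by omega⟩ : Fin n) = i := Fin.ext rfl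
  have e2 : (⟨(i:ℕ)+1, h3⟩ : Fin n) = j := Fin.ext h2.symm
  rw [e1, e2] at key
  exact key

/-- all commutators of generators lie in the double commutator subgroup -/
lemma gen_comm_mem (i j : Fin n) :
    ⁅f i, f j⁆ ∈
      (⁅(⁅G, G⁆ : Subgroup HomeoR), (⁅G, G⁆ : Subgroup HomeoR)⁆ : Subgroup HomeoR) := by
  rcases lt_trichotomy ((i:ℕ)) ((j:ℕ)) with h | h | h
  · by_cases h2 : (j:ℕ) = (i:ℕ) + 1
    · exact S.ci_mem' h2
    · rw [S.far_commute (by omega : (i:ℕ) + 2 ≤ (j:ℕ))]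
      exact one_mem _
  · have : i = j := Fin.ext h
    rw [this, comm_self]
    exact one_mem _
  · rw [← commutatorElement_inv]
    apply inv_mem
    by_cases h2 : (i:ℕ) = (j:ℕ) + 1
    · exact S.ci_mem' h2
    · rw [S.far_commute (by omega : (j:ℕ) + 2 ≤ (i:ℕ))]
      exact one_mem _

/-- Perfectness: the commutator subgroup equals the double commutator subgroup -/
lemma D_le_E :
    (⁅G, G⁆ : Subgroup HomeoR) ≤
      (⁅(⁅G, G⁆ : Subgroup HomeoR), (⁅G, G⁆ : Subgroup HomeoR)⁆ : Subgroup HomeoR) := by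
  set E := (⁅(⁅G, G⁆ : Subgroup HomeoR), (⁅G, G⁆ : Subgroup HomeoR)⁆ : Subgroup HomeoR)
    with hE
  rw [Subgroup.commutator_le]
  intro g hg h hh
  have hg' : g ∈ Subgroup.closure (Set.range f) := by rwa [← S.hG]
  have hh' : h ∈ Subgroup.closure (Set.range f) := by rwa [← S.hG]
  clear hg hh
  induction hg', hh' using Subgroup.closure_induction₂ with
  | mem x y hx hy =>
      obtain ⟨i, rfl⟩ := hx
      obtain ⟨j, rfl⟩ := hy
      exact S.gen_comm_mem i j
  | one_left x hx => rw [comm_one_left]; exact one_mem _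
  | one_right x hx => rw [comm_one_right]; exact one_mem _
  | mul_left x y z hx hy hz px py =>
      rw [comm_mul_left]
      refine mul_mem ?_ px
      exact S.conj_mem_E (by rw [S.hG]; exact hx) py
  | mul_right y z x hy hz hx py pz =>
      rw [comm_mul_right]
      refine mul_mem py ?_
      exact S.conj_mem_E (by rw [S.hG]; exact hy) pz
  | inv_left x y hx hy px =>
      rw [comm_inv_left]
      have h2 : x⁻¹ * ⁅x,y⁆⁻¹ * (x⁻¹)⁻¹ ∈ E :=
        S.conj_mem_E (by rw [S.hG]; exact inv_mem hx) (inv_mem px)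
      rwa [inv_inv] at h2
  | inv_right x y hx hy px =>
      rw [comm_inv_right]
      have h2 : y⁻¹ * ⁅x,y⁆⁻¹ * (y⁻¹)⁻¹ ∈ E :=
        S.conj_mem_E (by rw [S.hG]; exact inv_mem hy) (inv_mem px)
      rwa [inv_inv] at h2

end ChainSetup
end ChainAux

namespace ChainAux
namespace ChainSetup

variable {n : ℕ} {f : Fin n → HomeoR} {a b : Fin n → EReal} {G : Subgroup HomeoR}
variable (S : ChainSetup f a b G)
include S

lemma D_le_G : (⁅G, G⁆ : Subgroup HomeoR) ≤ G := by
  rw [Subgroup.commutator_le]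
  intro g hg h hh
  rw [commutatorElement_def]
  exact mul_mem (mul_mem (mul_mem hg hh) (inv_mem hg)) (inv_mem hh)

/-- The Higman-type argument: any subgroup of `HomeoR` which is normalized by the
commutator subgroup `D = ⁅G,G⁆` and contains some nontrivial element of `G`
contains all of `D`. Uses density of the orbit of `qN`. -/
lemma key_step
    (hdense : ∀ u₁ u₂ : ℝ, u₁ ∈ S.J → u₂ ∈ S.J → u₁ < u₂ →
      ∃ g, g ∈ G ∧ u₁ < g S.qN ∧ g S.qN < u₂)
    (M : Subgroup HomeoR)
    (hMnorm : ∀ σ ∈ (⁅G, G⁆ : Subgroup HomeoR), ∀ m ∈ M, σ * m * σ⁻¹ ∈ M)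
    {γ : HomeoR} (hγG : γ ∈ G) (hγM : γ ∈ M) (hγ1 : γ ≠ 1) :
    (⁅G, G⁆ : Subgroup HomeoR) ≤ M := by
  set D := (⁅G, G⁆ : Subgroup HomeoR) with hD
  suffices h : ∀ u ∈ D, ∀ v ∈ D, ⁅u, v⁆ ∈ M by
    exact le_trans S.D_le_E (Subgroup.commutator_le.2 h)
  intro u hu v hv
  -- supports of u and v are trapped in a compact interval [c, d] ⊆ J
  obtain ⟨huG, cu, du, hcu, hdu, Hu⟩ := S.commutator_le_TS hu
  obtain ⟨hvG, cv, dv, hcv, hdv, Hv⟩ := S.commutator_le_TS hv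
  obtain ⟨j₀, hj₀A, hj₀B⟩ := EReal.exists_between_coe_real S.A_lt_B
  set c : ℝ := min (min cu cv) j₀ with hc
  set d : ℝ := max (max du dv) j₀ with hd
  have hcJ : c ∈ S.J := by
    constructor
    · rcases min_cases (min cu cv) j₀ with ⟨h1, _⟩ | ⟨h1, _⟩
      · rw [hc, h1]
        rcases min_cases cu cv with ⟨h2, _⟩ | ⟨h2, _⟩
        · rw [h2]; exact hcu
        · rw [h2]; exact hcv
      · rw [hc, h1]; exact hj₀A
    · calc ((c:ℝ) : EReal) ≤ ((j₀:ℝ) : EReal) :=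
          EReal.coe_le_coe_iff.2 (min_le_right _ _)
        _ < S.B := hj₀B
  have hdJ : d ∈ S.J := by
    constructor
    · calc S.A < ((j₀:ℝ) : EReal) := hj₀A
        _ ≤ ((d:ℝ) : EReal) := EReal.coe_le_coe_iff.2 (le_max_right _ _)
    · rcases max_cases (max du dv) j₀ with ⟨h1, _⟩ | ⟨h1, _⟩
      · rw [hd, h1]
        rcases max_cases du dv with ⟨h2, _⟩ | ⟨h2, _⟩
        · rw [h2]; exact hdu
        · rw [h2]; exact hdv
      · rw [hd, h1]; exact hj₀B
  have hsuppu : ∀ x ∈ supp u, c ≤ x ∧ x ≤ d := by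
    intro x hx
    have h1 : ¬ (x ≤ cu ∨ du ≤ x) := fun hcase => hx (Hu x hcase)
    push_neg at h1
    constructor
    · exact le_trans (min_le_left _ _) (le_trans (min_le_left _ _) (le_of_lt h1.1))
    · exact le_trans (le_of_lt h1.2) (le_trans (le_max_left _ _) (le_max_left _ _))
  have hsuppv : ∀ x ∈ supp v, c ≤ x ∧ x ≤ d := by
    intro x hx
    have h1 : ¬ (x ≤ cv ∨ dv ≤ x) := fun hcase => hx (Hv x hcase)
    push_neg at h1
    constructor
    · exact le_trans (min_le_left _ _) (le_trans (min_le_right _ _) (le_of_lt h1.1))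
    · exact le_trans (le_of_lt h1.2) (le_trans (le_max_right _ _) (le_max_left _ _))
  -- a point moved by γ
  obtain ⟨x₀, hx₀⟩ := ne_one_iff.1 hγ1
  have hx₀J : x₀ ∈ S.J := S.supp_subset_J hγG hx₀
  have hγx₀J : γ x₀ ∈ S.J := S.maps_J hγG hx₀J
  -- the inner argument, for an interval (p, r) moved off itself by γ
  have inner : ∀ p r : ℝ, p ∈ S.J → r ∈ S.J → p < r →
      (∀ y, p < y → y < r → ¬(p < γ y ∧ γ y < r)) → ⁅u, v⁆ ∈ M := by
    intro p r hpJ hrJ hpr hmove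
    obtain ⟨ρ, hρG, Hρ⟩ := S.compress hdense hcJ hdJ hpJ hrJ hpr
    obtain ⟨σ, hσD, Hσ⟩ := S.loc hρG c d hcJ hdJ
    set u' := σ * u * σ⁻¹ with hu'
    set v' := σ * v * σ⁻¹ with hv'
    have hu'D : u' ∈ D := mul_mem (mul_mem hσD hu) (inv_mem hσD)
    have hv'D : v' ∈ D := mul_mem (mul_mem hσD hv) (inv_mem hσD)
    set U : Set ℝ := Set.Ioo p r with hU
    have hsuppu' : supp u' ⊆ U := by
      rw [hu', supp_conj]
      rintro _ ⟨z, hz, rfl⟩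
      obtain ⟨h1, h2⟩ := hsuppu z hz
      rw [Hσ z h1 h2]
      exact ⟨(Hρ z h1 h2).1, (Hρ z h1 h2).2⟩
    have hsuppv' : supp v' ⊆ U := by
      rw [hv', supp_conj]
      rintro _ ⟨z, hz, rfl⟩
      obtain ⟨h1, h2⟩ := hsuppv z hz
      rw [Hσ z h1 h2]
      exact ⟨(Hρ z h1 h2).1, (Hρ z h1 h2).2⟩
    have hUmove : ∀ x ∈ U, γ x ∉ U := by
      intro x hx hγx
      exact hmove x hx.1 hx.2 ⟨hγx.1, hγx.2⟩
    have htrick : ⁅⁅u', γ⁆, v'⁆ = ⁅u', v'⁆ :=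
      commutator_trick hsuppu' hsuppv' hUmove
    have hkM : ⁅u', γ⁆ ∈ M := by
      have h1 : ⁅u', γ⁆ = (u' * γ * u'⁻¹) * γ⁻¹ := by group
      rw [h1]
      exact mul_mem (hMnorm u' hu'D γ hγM) (inv_mem hγM)
    have hcommM : ⁅u', v'⁆ ∈ M := by
      rw [← htrick]
      have h1 : ⁅⁅u', γ⁆, v'⁆ = ⁅u', γ⁆ * (v' * ⁅u', γ⁆⁻¹ * v'⁻¹) := by group
      rw [h1]
      exact mul_mem hkM (hMnorm v' hv'D _ (inv_mem hkM))
    have h2 : ⁅u', v'⁆ = σ * ⁅u, v⁆ * σ⁻¹ := conj_comm σ u v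
    rw [h2] at hcommM
    have h3 := hMnorm σ⁻¹ (inv_mem hσD) _ hcommM
    have h4 : σ⁻¹ * (σ * ⁅u, v⁆ * σ⁻¹) * σ⁻¹⁻¹ = ⁅u, v⁆ := by group
    rwa [h4] at h3
  rcases lt_or_gt_of_ne hx₀ with hlt | hgt
  · -- γ x₀ < x₀ : use the interval (γ x₀, x₀)
    apply inner (γ x₀) x₀ hγx₀J hx₀J hlt
    intro y h1 h2 hcon
    have h3 : γ y < γ x₀ := γ.strictMono h2
    exact absurd hcon.1 (not_lt.2 (le_of_lt h3))
  · -- x₀ < γ x₀ : use the interval (x₀, γ x₀)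
    apply inner x₀ (γ x₀) hx₀J hγx₀J hgt
    intro y h1 h2 hcon
    have h3 : γ x₀ < γ y := γ.strictMono h1
    exact absurd hcon.2 (not_lt.2 (le_of_lt h3))

end ChainSetup
end ChainAux


open ChainAux in
theorem chain_main {n : ℕ} (f : Fin n → HomeoR)
    (hpre : IsPrechainGens f)
    (G : Subgroup HomeoR) (hG : G = Subgroup.closure (Set.range f))
    (hmin : ∀ p ∈ suppG G, suppG G ⊆ closure (orbitG G p)) :
    IsSimpleGroup ↥(commutator ↥G) ∧
      ∀ N : Subgroup ↥G, N.Normal → N ≠ ⊥ → commutator ↥G ≤ N := by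
  classical
  obtain ⟨hn, a, b, hab, hsupp, hge⟩ := hpre
  have S : ChainSetup f a b G := ⟨hn, hab, hsupp, hge, hG⟩
  set D := (⁅G, G⁆ : Subgroup HomeoR) with hD
  -- suppG G = J
  have hJsub : S.J ⊆ suppG G := by
    intro x hx
    obtain ⟨i, hi⟩ := S.exists_mem_Ji hx
    have h2 : x ∈ supp (f i) := by rw [hsupp i]; exact hi
    exact Set.mem_biUnion (S.f_mem i) h2
  -- density of the orbit of qN
  have hdense : ∀ u₁ u₂ : ℝ, u₁ ∈ S.J → u₂ ∈ S.J → u₁ < u₂ →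
      ∃ g, g ∈ G ∧ u₁ < g S.qN ∧ g S.qN < u₂ := by
    intro u₁ u₂ h1 h2 h12
    obtain ⟨w, hw1, hw2⟩ := exists_between h12
    have hwJ : w ∈ S.J := S.J_convex h1 h2 (le_of_lt hw1) (le_of_lt hw2)
    have hqN_supp : S.qN ∈ suppG G := hJsub S.qN_spec.2
    have hw_cl : w ∈ closure (orbitG G S.qN) := hmin S.qN hqN_supp (hJsub hwJ)
    have hne : (Set.Ioo u₁ u₂ ∩ orbitG G S.qN).Nonempty :=
      mem_closure_iff.1 hw_cl _ isOpen_Ioo ⟨hw1, hw2⟩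
    obtain ⟨y, ⟨hy1, hy2⟩, g, hgG, hgy⟩ := hne
    exact ⟨g, hgG, by rw [hgy]; exact hy1, by rw [hgy]; exact hy2⟩
  -- the commutator subgroup of ↥G corresponds to D
  have hDmap : (commutator ↥G).map G.subtype = D := by
    rw [commutator_def, Subgroup.map_commutator]
    have htop : (⊤ : Subgroup ↥G).map G.subtype = G := by
      ext x
      simp [Subgroup.mem_map]
    rw [htop]
  constructor
  · -- simplicity of the commutator subgroup
    set K := commutator ↥G with hK
    -- a nontrivial element of K
    have hc0 : ⁅f S.i0, f ⟨1, by have := S.hn; omega⟩⁆ ≠ (1 : HomeoR) := S.c0_ne_one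
    set i1 : Fin n := ⟨1, by have := S.hn; omega⟩ with hi1
    set g0 : ↥G := ⟨f S.i0, S.f_mem S.i0⟩ with hg0
    set g1 : ↥G := ⟨f i1, S.f_mem i1⟩ with hg1
    have hζmem : ⁅g0, g1⁆ ∈ K := by
      rw [hK, commutator_def]
      exact Subgroup.commutator_mem_commutator (Subgroup.mem_top g0) (Subgroup.mem_top g1)
    have hζcoe : ((⁅g0, g1⁆ : ↥G) : HomeoR) = ⁅f S.i0, f i1⁆ := rfl
    haveI hnontriv : Nontrivial ↥K := by
      refine ⟨⟨⁅g0, g1⁆, hζmem⟩, 1, ?_⟩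
      intro hcon
      apply hc0
      have h1 : (⁅g0, g1⁆ : ↥G) = 1 := by
        have := congrArg (fun z : ↥K => (z : ↥G)) hcon
        simpa using this
      rw [← hζcoe, h1]
      rfl
    refine ⟨fun M₀ hM₀norm => ?_⟩
    by_cases hbot : M₀ = ⊥
    · exact Or.inl hbot
    · right
      -- a nontrivial element of M₀
      have hexists : ∃ y ∈ M₀, y ≠ 1 := by
        rcases M₀.bot_or_exists_ne_one with h | h
        · exact absurd h hbot
        · exact h
      obtain ⟨y, hyM, hy1⟩ := hexists
      have hγG : (((y : ↥K) : ↥G) : HomeoR) ∈ G := ((y : ↥K) : ↥G).2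
      have hγ1 : (((y : ↥K) : ↥G) : HomeoR) ≠ 1 := by
        intro hcon
        apply hy1
        apply Subtype.ext
        apply Subtype.ext
        exact hcon
      set M : Subgroup HomeoR := (M₀.map K.subtype).map G.subtype with hM
      have hγM : (((y : ↥K) : ↥G) : HomeoR) ∈ M := by
        apply Subgroup.mem_map.2
        exact ⟨(y : ↥G), Subgroup.mem_map.2 ⟨y, hyM, rfl⟩, rfl⟩
      have hMnorm : ∀ σ ∈ D, ∀ m ∈ M, σ * m * σ⁻¹ ∈ M := by
        intro σ hσ m hm
        obtain ⟨s, hsK, hs⟩ := Subgroup.mem_map.1 (hDmap ▸ hσ : σ ∈ (commutator ↥G).map G.subtype)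
        obtain ⟨w1, hw1, hw1e⟩ := Subgroup.mem_map.1 hm
        obtain ⟨z, hzM, hze⟩ := Subgroup.mem_map.1 hw1
        set s'' : ↥K := ⟨s, hsK⟩ with hs''
        have hconj : s'' * z * s''⁻¹ ∈ M₀ := hM₀norm.conj_mem z hzM s''
        apply Subgroup.mem_map.2
        refine ⟨K.subtype (s'' * z * s''⁻¹),
          Subgroup.mem_map.2 ⟨s'' * z * s''⁻¹, hconj, rfl⟩, ?_⟩
        rw [map_mul, map_mul, map_inv, map_mul, map_mul, map_inv]
        have h1 : G.subtype (K.subtype s'') = σ := hs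
        have h2 : G.subtype (K.subtype z) = m := by rw [hze, hw1e]
        rw [h1, h2]
      have hDM : D ≤ M := S.key_step hdense M hMnorm hγG hγM hγ1
      -- conclude M₀ = ⊤
      rw [eq_top_iff]
      intro w _
      have hwD : ((w : ↥G) : HomeoR) ∈ D := by
        rw [← hDmap]
        exact Subgroup.mem_map.2 ⟨(w : ↥G), w.2, rfl⟩
      have hwM : ((w : ↥G) : HomeoR) ∈ M := hDM hwD
      obtain ⟨w1, hw1, hw1e⟩ := Subgroup.mem_map.1 hwM
      obtain ⟨z, hzM, hze⟩ := Subgroup.mem_map.1 hw1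
      have h3 : w1 = (w : ↥G) := Subgroup.subtype_injective G hw1e
      have h4 : z = w := by
        apply Subgroup.subtype_injective K
        rw [hze, h3]
        rfl
      rwa [← h4]
  · -- every nontrivial normal subgroup contains the commutator subgroup
    intro N hNorm hNbot
    have hexists : ∃ x ∈ N, x ≠ 1 := by
      rcases N.bot_or_exists_ne_one with h | h
      · exact absurd h hNbot
      · exact h
    obtain ⟨x, hxN, hx1⟩ := hexists
    have hγG : (x : HomeoR) ∈ G := x.2
    have hγ1 : (x : HomeoR) ≠ 1 := by
      intro hcon
      exact hx1 (Subtype.ext hcon)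
    set M : Subgroup HomeoR := N.map G.subtype with hM
    have hγM : (x : HomeoR) ∈ M := Subgroup.mem_map.2 ⟨x, hxN, rfl⟩
    have hDG : D ≤ G := S.D_le_G
    have hMnorm : ∀ σ ∈ D, ∀ m ∈ M, σ * m * σ⁻¹ ∈ M := by
      intro σ hσ m hm
      obtain ⟨y, hyN, hye⟩ := Subgroup.mem_map.1 hm
      set σ' : ↥G := ⟨σ, hDG hσ⟩ with hσ'
      apply Subgroup.mem_map.2
      refine ⟨σ' * y * σ'⁻¹, hNorm.conj_mem y hyN σ', ?_⟩
      rw [map_mul, map_mul, map_inv]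
      have h1 : G.subtype σ' = σ := rfl
      rw [h1, hye]
    have hDM : D ≤ M := S.key_step hdense M hMnorm hγG hγM hγ1
    intro z hz
    have hzD : (z : HomeoR) ∈ D := by
      rw [← hDmap]
      exact Subgroup.mem_map.2 ⟨z, hz, rfl⟩
    obtain ⟨y, hyN, hye⟩ := Subgroup.mem_map.1 (hDM hzD)
    have h3 : y = z := Subgroup.subtype_injective G hye
    rwa [← h3]


/-- If an `n`-chain group `G` acts minimally on its support, then the
commutator subgroup `G'` is simple and every nontrivial normal subgroup of `G`
contains `G'`. -/
theorem stmt4 {n : ℕ} (f : Fin n → HomeoR) (hf : IsChainGens f)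
    (G : Subgroup HomeoR) (hG : G = Subgroup.closure (Set.range f))
    (hmin : ∀ p ∈ suppG G, suppG G ⊆ closure (orbitG G p)) :
    IsSimpleGroup ↥(commutator ↥G) ∧
      ∀ N : Subgroup ↥G, N.Normal → N ≠ ⊥ → commutator ↥G ≤ N :=
  chain_main f hf.1 G hG hmin
end

section
/- Let a ∈ Homeo⁺(ℝ) be the translation a(x) = x + 1, let n ≥ 1, and let G = ⟨g₁,…,gₙ⟩ ≤ Homeo⁺(ℝ) be a subgroup with supp G ⊆ (0, 1) such that the abelianization G/G′ is isomorphic to ℤⁿ. Then G is isomorphic to a subgroup of the commutator subgroup of the group ⟨G ∪ {a}⟩ ≤ Homeo⁺(ℝ). -/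
open scoped commutatorElement

section Aux

lemma apply_eq_of_not_mem_supp {f : HomeoR} {x : ℝ} (h : x ∉ supp f) : f x = x := not_not.mp h

lemma supp_apply_mem {f : HomeoR} {x : ℝ} (h : x ∈ supp f) : f x ∈ supp f := by
  intro hc
  exact h (f.injective hc)

lemma commute_of_disjoint_supp {f g : HomeoR} (h : Disjoint (supp f) (supp g)) :
    Commute f g := by
  have key : ∀ x : ℝ, f (g x) = g (f x) := by
    intro x
    by_cases hf : x ∈ supp f
    · have hg : x ∉ supp g := fun hx => (Set.disjoint_left.mp h hf) hx
      have hg2 : f x ∉ supp g := fun hx => (Set.disjoint_left.mp h (supp_apply_mem hf)) hx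
      rw [apply_eq_of_not_mem_supp hg, apply_eq_of_not_mem_supp hg2]
    · by_cases hg : x ∈ supp g
      · have hf2 : g x ∉ supp f := fun hx => (Set.disjoint_right.mp h (supp_apply_mem hg)) hx
        rw [apply_eq_of_not_mem_supp hf2, apply_eq_of_not_mem_supp hf]
      · rw [apply_eq_of_not_mem_supp hf, apply_eq_of_not_mem_supp hg,
          apply_eq_of_not_mem_supp hf]
  exact OrderIso.ext (funext key)

lemma supp_conj (c f : HomeoR) : supp (c * f * c⁻¹) = c '' supp f := by
  ext x
  constructor
  · intro hx
    refine ⟨c⁻¹ x, ?_, c.apply_symm_apply x⟩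
    intro hc
    exact hx (by show c (f (c⁻¹ x)) = x; rw [hc]; exact c.apply_symm_apply x)
  · rintro ⟨y, hy, rfl⟩
    intro hc
    have hinv : ∀ z, c⁻¹ z = c.symm z := fun _ => rfl
    have : f (c⁻¹ (c y)) = c⁻¹ (c y) := c.injective (by simpa using hc)
    rw [hinv, c.symm_apply_apply] at this
    exact hy this

lemma supp_mem_subgroup {G : Subgroup HomeoR} {f : HomeoR} (h : f ∈ G) : supp f ⊆ suppG G :=
  Set.subset_biUnion_of_mem h

/-- The subgroup of homeos fixing `(-∞, 1]` pointwise. -/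
def fixIic1 : Subgroup HomeoR where
  carrier := {f : HomeoR | ∀ x : ℝ, x ≤ 1 → f x = x}
  one_mem' := fun _ _ => rfl
  mul_mem' := by
    intro p q hp hq x hx
    show p (q x) = x
    rw [hq x hx, hp x hx]
  inv_mem' := by
    intro p hp x hx
    have h2 : p⁻¹ (p x) = x := p.symm_apply_apply x
    rw [hp x hx] at h2
    exact h2

end Aux

/-- Let `a(x) = x + 1` and `G = ⟨g₁,…,gₙ⟩ ≤ Homeo⁺(0,1)` with
`G/G' ≅ ℤⁿ`. Then `G` embeds into the commutator subgroup of `⟨G, a⟩`. -/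
theorem stmt11 (a : HomeoR) (ha : ∀ x : ℝ, a x = x + 1)
    {n : ℕ} (hn : 1 ≤ n) (g : Fin n → HomeoR)
    (G : Subgroup HomeoR) (hG : G = Subgroup.closure (Set.range g))
    (hsupp : suppG G ⊆ Set.Ioo (0 : ℝ) 1)
    (hab : Nonempty (Abelianization ↥G ≃* Multiplicative (Fin n → ℤ))) :
    ∃ φ : ↥G →* ↥(commutator ↥(Subgroup.closure ((G : Set HomeoR) ∪ {a}))),
      Function.Injective φ := by
  classical
  obtain ⟨e⟩ := hab
  -- generators as elements of G
  have hgmem : ∀ i, g i ∈ G := fun i => hG ▸ Subgroup.subset_closure ⟨i, rfl⟩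
  set g' : Fin n → ↥G := fun i => ⟨g i, hgmem i⟩ with hg'def
  have hGtop : Subgroup.closure (Set.range g') = ⊤ := by
    apply Subgroup.map_injective G.subtype_injective
    rw [MonoidHom.map_closure, ← MonoidHom.range_eq_map, Subgroup.range_subtype,
      ← Set.range_comp]
    have : G.subtype ∘ g' = g := rfl
    rw [this, ← hG]
  -- powers of the translation
  have hapow : ∀ (m : ℕ) (x : ℝ), (a ^ m) x = x + m := by
    intro m
    induction m with
    | zero => intro x; rw [pow_zero]; simp
    | succ k ih =>
        intro x
        have hstep : (a ^ (k+1)) x = a ((a ^ k) x) := by rw [pow_succ']; rfl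
        rw [hstep, ih, ha]
        push_cast
        ring
  have hainv : ∀ (m : ℕ) (x : ℝ), ((a ^ m)⁻¹) x = x - m := by
    intro m x
    apply (a ^ m).injective
    have h1 : (a ^ m) ((a ^ m)⁻¹ x) = x := (a ^ m).apply_symm_apply x
    rw [h1, hapow]
    ring
  -- supports
  have hsuppmem : ∀ f ∈ G, supp f ⊆ Set.Ioo (0:ℝ) 1 :=
    fun f hf => (supp_mem_subgroup hf).trans hsupp
  set H : Subgroup HomeoR := Subgroup.closure ((G : Set HomeoR) ∪ {a}) with hHdef
  have hGH : G ≤ H := fun x hx => Subgroup.subset_closure (Or.inl hx)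
  have haH : a ∈ H := Subgroup.subset_closure (Or.inr rfl)
  -- the shifted conjugates
  set h : Fin n → HomeoR := fun i => a ^ ((i:ℕ)+1) * g i * (a ^ ((i:ℕ)+1))⁻¹ with hhdef
  have hsupph : ∀ i, supp (h i) ⊆ Set.Ioo (((i:ℕ):ℝ)+1) (((i:ℕ):ℝ)+2) := by
    intro i x hx
    rw [hhdef, supp_conj] at hx
    obtain ⟨y, hy, rfl⟩ := hx
    have hy2 := hsuppmem _ (hgmem i) hy
    rw [hapow]
    constructor
    · have := hy2.1; push_cast; linarith
    · have := hy2.2; push_cast; linarith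
  have hdisj01 : ∀ i, ∀ f ∈ G, Disjoint (supp f) (supp (h i)) := by
    intro i f hf
    rw [Set.disjoint_left]
    intro x hx1 hx2
    have h1 := (hsuppmem _ hf hx1).2
    have h2 := (hsupph i hx2).1
    have : (0:ℝ) ≤ ((i:ℕ):ℝ) := Nat.cast_nonneg _
    linarith
  have hcommG : ∀ i, ∀ f ∈ G, Commute f (h i) :=
    fun i f hf => commute_of_disjoint_supp (hdisj01 i f hf)
  have hcommh : ∀ i j : Fin n, i ≠ j → Commute (h i) (h j) := by
    intro i j hij
    apply commute_of_disjoint_supp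
    rw [Set.disjoint_left]
    intro x hx1 hx2
    have h1 := hsupph i hx1
    have h2 := hsupph j hx2
    have hij' : (i:ℕ) ≠ (j:ℕ) := fun hc => hij (Fin.ext hc)
    rcases lt_or_gt_of_ne hij' with hlt | hlt
    · have : ((i:ℕ):ℝ) + 1 ≤ ((j:ℕ):ℝ) := by
        have : ((i:ℕ):ℝ) + 1 ≤ ((j:ℕ):ℝ) := by exact_mod_cast Nat.succ_le_of_lt hlt
        exact this
      have := h1.2; have := h2.1; linarith
    · have : ((j:ℕ):ℝ) + 1 ≤ ((i:ℕ):ℝ) := by exact_mod_cast Nat.succ_le_of_lt hlt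
      have := h1.1; have := h2.2; linarith
  -- the subgroup K
  set K : Subgroup HomeoR := Subgroup.centralizer (G : Set HomeoR) ⊓ H ⊓ fixIic1 with hKdef
  have hKH : K ≤ H := fun x hx => hx.1.2
  have hKC : K ≤ Subgroup.centralizer (G : Set HomeoR) := le_trans inf_le_left inf_le_left
  have hmemK : ∀ i, h i ∈ K := by
    intro i
    rw [hKdef, Subgroup.mem_inf, Subgroup.mem_inf]
    refine ⟨⟨?_, ?_⟩, ?_⟩
    · rw [Subgroup.mem_centralizer_iff]
      intro f hf
      exact (hcommG i f hf).eq
    · exact mul_mem (mul_mem (pow_mem haH _) (hGH (hgmem i))) (inv_mem (pow_mem haH _))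
    · intro x hx
      apply apply_eq_of_not_mem_supp
      intro hc
      have h1 := (hsupph i hc).1
      have : (0:ℝ) ≤ ((i:ℕ):ℝ) := Nat.cast_nonneg _
      linarith
  set hK : Fin n → ↥K := fun i => ⟨h i, hmemK i⟩ with hhKdef
  -- the homomorphism Ψ₀ : ℤⁿ →* K
  have hcommhK : Pairwise fun (i j : Fin n) => ∀ (x y : Multiplicative ℤ),
      Commute ((zpowersHom ↥K (hK i)) x) ((zpowersHom ↥K (hK j)) y) := by
    intro i j hij x y
    rw [zpowersHom_apply, zpowersHom_apply]
    have hbase : Commute (hK i) (hK j) := Subtype.ext (hcommh i j hij).eq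
    exact (hbase.zpow_zpow _ _)
  set Ψ0 : Multiplicative (Fin n → ℤ) →* ↥K :=
    (MonoidHom.noncommPiCoprod (fun i => zpowersHom ↥K (hK i)) hcommhK).comp
      (MulEquiv.piMultiplicative (fun _ : Fin n => ℤ)).toMonoidHom with hΨ0def
  have hΨ0single : ∀ i, Ψ0 (Multiplicative.ofAdd (Pi.single i 1)) = hK i := by
    intro i
    have h1 : (MulEquiv.piMultiplicative (fun _ : Fin n => ℤ))
        (Multiplicative.ofAdd (Pi.single i 1)) =
        Pi.mulSingle i (Multiplicative.ofAdd (1:ℤ)) := by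
      ext j
      by_cases hj : j = i
      · subst hj; simp
      · simp [Pi.mulSingle, Pi.single_eq_of_ne hj, Pi.apply_single, hj]
    rw [hΨ0def, MonoidHom.comp_apply, MulEquiv.coe_toMonoidHom, h1,
      MonoidHom.noncommPiCoprod_mulSingle, zpowersHom_apply]
    simp
  -- abelianization and the coordinate map κ
  set ρ : ↥G →* Multiplicative (Fin n → ℤ) := e.toMonoidHom.comp Abelianization.of with hρdef
  set q : ↥G → (Fin n → ℤ) := fun x => Multiplicative.toAdd (ρ x) with hqdef
  have hq1 : q 1 = 0 := by simp [hqdef]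
  have hqmul : ∀ x y, q (x * y) = q x + q y := by intro x y; simp [hqdef]
  have hqinv : ∀ x, q x⁻¹ = - q x := by intro x; simp [hqdef]
  set v : Fin n → (Fin n → ℤ) := fun i => q (g' i) with hvdef
  set M : (Fin n → ℤ) →ₗ[ℤ] (Fin n → ℤ) := Fintype.linearCombination ℤ v with hMdef
  have hρsurj : Function.Surjective ρ :=
    e.surjective.comp (fun z => Quot.inductionOn z fun x => ⟨x, rfl⟩)
  have hspan : Submodule.span ℤ (Set.range v) = ⊤ := by
    rw [Submodule.eq_top_iff']
    intro w
    set N := Submodule.span ℤ (Set.range v) with hNdef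
    set P : Subgroup ↥G :=
      { carrier := {x : ↥G | q x ∈ N}
        one_mem' := by simp [hq1]
        mul_mem' := by intro x y hx hy; simp only [Set.mem_setOf_eq, hqmul]; exact add_mem hx hy
        inv_mem' := by intro x hx; simp only [Set.mem_setOf_eq, hqinv]; exact neg_mem hx } with hPdef
    have hPall : ∀ x : ↥G, q x ∈ N := by
      have hle : Subgroup.closure (Set.range g') ≤ P := by
        rw [Subgroup.closure_le]
        rintro _ ⟨i, rfl⟩
        exact Submodule.subset_span ⟨i, rfl⟩
      rw [hGtop] at hle
      exact fun x => hle (Subgroup.mem_top x)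
    obtain ⟨x, hx⟩ := hρsurj (Multiplicative.ofAdd w)
    have : q x = w := by rw [hqdef]; simp [hx]
    rw [← this]
    exact hPall x
  have hMsurj : Function.Surjective M := by
    rw [← LinearMap.range_eq_top, hMdef, Fintype.range_linearCombination, hspan]
  have hMinj : Function.Injective M :=
    IsNoetherian.injective_of_surjective_endomorphism M hMsurj
  set E := LinearEquiv.ofBijective M ⟨hMinj, hMsurj⟩ with hEdef
  set κ : ↥G →* Multiplicative (Fin n → ℤ) :=
    MonoidHom.mk' (fun x => Multiplicative.ofAdd (E.symm (q x)))
      (by intro x y; simp only [hqmul, map_add, ofAdd_add]) with hκdef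
  have hκg : ∀ i, κ (g' i) = Multiplicative.ofAdd (Pi.single i 1) := by
    intro i
    have hM1 : E (Pi.single i 1) = v i := by
      show M (Pi.single i 1) = v i
      rw [hMdef, Fintype.linearCombination_apply_single, one_smul]
    show Multiplicative.ofAdd (E.symm (q (g' i))) = _
    rw [show q (g' i) = v i from rfl, ← hM1, LinearEquiv.symm_apply_apply]
  -- the homomorphism Φ : G →* H
  set ΨH : Multiplicative (Fin n → ℤ) →* ↥H := (Subgroup.inclusion hKH).comp Ψ0 with hΨHdef
  set ι : ↥G →* ↥H := Subgroup.inclusion hGH with hιdef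
  have hcent : ∀ (u : Multiplicative (Fin n → ℤ)) (b : ↥G), Commute (ι b) (ΨH u) := by
    intro u b
    have hmem := hKC (Ψ0 u).2
    rw [Subgroup.mem_centralizer_iff] at hmem
    exact Subtype.ext (hmem (b : HomeoR) b.2)
  set Φ : ↥G →* ↥H := MonoidHom.mk' (fun x => ι x * (ΨH (κ x))⁻¹) (by
    intro x y
    have c2 : Commute (ΨH (κ x)) (ΨH (κ y)) := (Commute.all (κ x) (κ y)).map ΨH
    have c1 : Commute (ι y) (ΨH (κ x))⁻¹ := (hcent (κ x) y).inv_right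
    show ι (x*y) * (ΨH (κ (x*y)))⁻¹ = (ι x * (ΨH (κ x))⁻¹) * (ι y * (ΨH (κ y))⁻¹)
    rw [map_mul ι, map_mul κ, map_mul ΨH, mul_inv_rev]
    calc ι x * ι y * ((ΨH (κ y))⁻¹ * (ΨH (κ x))⁻¹)
        = ι x * ι y * ((ΨH (κ x))⁻¹ * (ΨH (κ y))⁻¹) := by
          rw [(c2.inv_inv).eq]
      _ = ι x * (ι y * (ΨH (κ x))⁻¹) * (ΨH (κ y))⁻¹ := by group
      _ = ι x * ((ΨH (κ x))⁻¹ * ι y) * (ΨH (κ y))⁻¹ := by rw [c1.eq]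
      _ = ι x * (ΨH (κ x))⁻¹ * (ι y * (ΨH (κ y))⁻¹) := by group) with hΦdef
  -- Φ lands in the commutator subgroup
  have hΦcomm : ∀ x : ↥G, Φ x ∈ commutator ↥H := by
    have hle : Subgroup.closure (Set.range g') ≤ ((Abelianization.of).comp Φ).ker := by
      rw [Subgroup.closure_le]
      rintro _ ⟨i, rfl⟩
      show Abelianization.of (Φ (g' i)) = 1
      have hΦg : Φ (g' i) = ι (g' i) * ((Subgroup.inclusion hKH) (hK i))⁻¹ := by
        show ι (g' i) * (ΨH (κ (g' i)))⁻¹ = _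
        rw [hκg i, hΨHdef, MonoidHom.comp_apply, hΨ0single i]
      rw [hΦg]
      set aH : ↥H := ⟨a, haH⟩ with haHdef
      have hconj : (Subgroup.inclusion hKH) (hK i) =
          aH ^ ((i:ℕ)+1) * ι (g' i) * (aH ^ ((i:ℕ)+1))⁻¹ := by
        apply Subtype.ext
        push_cast
        rfl
      rw [map_mul, map_inv, hconj, map_mul, map_mul, map_inv]
      generalize Abelianization.of (ι (g' i)) = P
      generalize Abelianization.of (aH ^ ((i:ℕ)+1)) = Q
      rw [mul_comm Q P]
      group
    rw [hGtop] at hle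
    intro x
    have := hle (Subgroup.mem_top x)
    rw [MonoidHom.mem_ker, MonoidHom.comp_apply] at this
    exact (QuotientGroup.eq_one_iff (Φ x)).mp this
  refine ⟨MonoidHom.codRestrict Φ (commutator ↥H) hΦcomm, ?_⟩
  rw [injective_iff_map_eq_one]
  intro x hx
  have hΦ1 : Φ x = 1 := by
    have h' : ((MonoidHom.codRestrict Φ (commutator ↥H) hΦcomm) x : ↥H) = ((1 : ↥(commutator ↥H)) : ↥H) :=
      congrArg _ hx
    exact h'
  have heq : ι x = ΨH (κ x) := by
    have h2 : ι x * (ΨH (κ x))⁻¹ = 1 := hΦ1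
    rwa [mul_inv_eq_one] at h2
  have hval : (x : HomeoR) = ((Ψ0 (κ x) : ↥K) : HomeoR) := congrArg Subtype.val heq
  have hfix : ∀ t : ℝ, t ≤ 1 → ((Ψ0 (κ x) : ↥K) : HomeoR) t = t :=
    fun t ht => (Ψ0 (κ x)).2.2 t ht
  apply Subtype.ext
  apply OrderIso.ext
  funext t
  show (x : HomeoR) t = t
  by_contra hc
  have ht : t ∈ supp (x : HomeoR) := hc
  have ht2 := hsuppmem _ x.2 ht
  have := hfix t (le_of_lt ht2.2)
  rw [← hval] at this
  exact hc this
end
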